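/- arXiv:2503.05256 — 2 statements merged into one kernel-verified Lean document; each statement's English description precedes it below -/
import Mathlib

section
/- Let (X₁, X₂) be a pair of identically distributed log-normal random variables, X₁ ≍ X₂ ~ LN(μ, σ²), with aggregate loss function φ⁻(u) = F_{X₁}^{-1}(u) + F_{X₁}^{-1}(1 − u) on (0,1). Then φ⁻ satisfies φ⁻(u) = φ⁻(1 − u) for all u ∈ (0,1), φ⁻ is strictly decreasing on (0, 1/2) and strictly increasing on (1/2, 1), and the counter-monotonic sum S⁻ satisfies F_{S⁻}^{-1}(1 − q) = F_{X₁}^{-1}(q/2) + F_{X₁}^{-1}(1 − q/2) for all q ∈ (0,1). -/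
open MeasureTheory ProbabilityTheory Set

noncomputable section

variable {Ω : Type*} [MeasurableSpace Ω]

/-- The cumulative distribution function of the random variable `X` under `P`. -/
def rvCdf (P : Measure Ω) (X : Ω → ℝ) : ℝ → ℝ := fun x => (P {ω | X ω ≤ x}).toReal

/-- The survival function `x ↦ P(X > x)`. -/
def rvSurv (P : Measure Ω) (X : Ω → ℝ) : ℝ → ℝ := fun x => (P {ω | x < X ω}).toReal

/-- The left inverse `F⁻¹(p) = inf {x | F x ≥ p}` of a cdf `F`. -/
def leftInv (F : ℝ → ℝ) (p : ℝ) : ℝ := sInf {x | p ≤ F x}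

/-- The right inverse `F⁻¹⁺(p) = sup {x | F x ≤ p}` of a cdf `F`. -/
def rightInv (F : ℝ → ℝ) (p : ℝ) : ℝ := sSup {x | F x ≤ p}

/-- `g : [0,1] → [0,1]` is a distortion function: nondecreasing with `g 0 = 0`, `g 1 = 1`. -/
def IsDistortion (g : ℝ → ℝ) : Prop :=
  MonotoneOn g (Icc 0 1) ∧ g 0 = 0 ∧ g 1 = 1 ∧ ∀ q ∈ Icc (0:ℝ) 1, g q ∈ Icc (0:ℝ) 1

/-- The dual distortion function `ḡ(q) = 1 - g(1 - q)`. -/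
def dualDistortion (g : ℝ → ℝ) : ℝ → ℝ := fun q => 1 - g (1 - q)

/-- The distortion risk measure
`ρ_g[X] = -∫_{-∞}^0 (1 - g(P(X > x))) dx + ∫_0^∞ g(P(X > x)) dx`. -/
def rho (P : Measure Ω) (g : ℝ → ℝ) (X : Ω → ℝ) : ℝ :=
  (- ∫ x in Iio (0:ℝ), (1 - g (rvSurv P X x))) + ∫ x in Ioi (0:ℝ), g (rvSurv P X x)

/-- The two integrals defining the distortion risk measure `ρ_g[X]` are finite. -/
def RhoFinite (P : Measure Ω) (g : ℝ → ℝ) (X : Ω → ℝ) : Prop :=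
  IntegrableOn (fun x => 1 - g (rvSurv P X x)) (Iio (0:ℝ)) volume ∧
  IntegrableOn (fun x => g (rvSurv P X x)) (Ioi (0:ℝ)) volume

/-- `U` is uniformly distributed on `[0,1]`. -/
def IsUniform01 (P : Measure Ω) (U : Ω → ℝ) : Prop :=
  Measurable U ∧ Measure.map U P = volume.restrict (Icc (0:ℝ) 1)

/-- The counter-monotonic sum `S⁻ = F_{X₁}⁻¹(U) + F_{X₂}⁻¹(1 - U)`. -/
def cmSum (P : Measure Ω) (X₁ X₂ : Ω → ℝ) (U : Ω → ℝ) : Ω → ℝ :=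
  fun ω => leftInv (rvCdf P X₁) (U ω) + leftInv (rvCdf P X₂) (1 - U ω)

/-- `X` is symmetric: for some `m`, `P(X ≤ m - x) = P(X ≥ m + x)` for all `x`. -/
def IsSymmetricRV (P : Measure Ω) (X : Ω → ℝ) : Prop :=
  ∃ m : ℝ, ∀ x : ℝ, P {ω | X ω ≤ m - x} = P {ω | m + x ≤ X ω}

/-- Dispersive order `X ≤_disp Y`. -/
def DispLE (P : Measure Ω) (X Y : Ω → ℝ) : Prop :=
  ∀ u v : ℝ, 0 < v → v ≤ u → u < 1 →
    leftInv (rvCdf P X) u - leftInv (rvCdf P X) v ≤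
      leftInv (rvCdf P Y) u - leftInv (rvCdf P Y) v

/-- The cdf of `X` is continuous and strictly increasing on `(F⁻¹⁺(0), F⁻¹(1))`. -/
def CdfRegular (P : Measure Ω) (X : Ω → ℝ) : Prop :=
  ContinuousOn (rvCdf P X) (Ioo (rightInv (rvCdf P X) 0) (leftInv (rvCdf P X) 1)) ∧
  StrictMonoOn (rvCdf P X) (Ioo (rightInv (rvCdf P X) 0) (leftInv (rvCdf P X) 1))

/-- Value-at-Risk `VaR_p[X] = F_X⁻¹(p)`. -/
def VaR (P : Measure Ω) (X : Ω → ℝ) (p : ℝ) : ℝ := leftInv (rvCdf P X) p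

/-- Tail-Value-at-Risk `TVaR_p[X] = (1/(1-p)) ∫_p^1 F_X⁻¹(q) dq`. -/
def TVaR (P : Measure Ω) (X : Ω → ℝ) (p : ℝ) : ℝ :=
  (1 - p)⁻¹ * ∫ q in p..1, leftInv (rvCdf P X) q

/-- Left-Tail-Value-at-Risk `LTVaR_p[X] = (1/p) ∫_0^p F_X⁻¹(q) dq`. -/
def LTVaR (P : Measure Ω) (X : Ω → ℝ) (p : ℝ) : ℝ :=
  p⁻¹ * ∫ q in (0:ℝ)..p, leftInv (rvCdf P X) q

/-- The standard normal cdf `Φ`. -/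
def stdNormCdf : ℝ → ℝ := fun x => ((gaussianReal 0 1) (Iic x)).toReal

/-- The inverse `Φ⁻¹` of the standard normal cdf. -/
def stdNormInv : ℝ → ℝ := fun p => sInf {x | p ≤ stdNormCdf x}

/-- The Wang transform distortion function at level `p`. -/
def wangG (p : ℝ) : ℝ → ℝ := fun q => stdNormCdf (stdNormInv q + stdNormInv p)

/-- The Wang transform risk measure at level `p`. -/
def WT (P : Measure Ω) (X : Ω → ℝ) (p : ℝ) : ℝ := rho P (wangG p) X

/-- `X ~ N(μ, σ²)`. -/
def IsNormalRV (P : Measure Ω) (X : Ω → ℝ) (μ σ : ℝ) : Prop :=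
  Measurable X ∧ Measure.map X P = gaussianReal μ (⟨σ ^ 2, sq_nonneg σ⟩ : NNReal)

/-- `X ~ LN(μ, σ²)`, i.e. `X` is distributed as `exp Z` with `Z ~ N(μ, σ²)`. -/
def IsLogNormalRV (P : Measure Ω) (X : Ω → ℝ) (μ σ : ℝ) : Prop :=
  Measurable X ∧
    Measure.map X P = Measure.map Real.exp (gaussianReal μ (⟨σ ^ 2, sq_nonneg σ⟩ : NNReal))

/-- `X ~ Student(ν)`: density proportional to `(1 + x²/ν)^(-(ν+1)/2)`. -/
def IsStudentRV (P : Measure Ω) (X : Ω → ℝ) (ν : ℝ) : Prop :=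
  Measurable X ∧ ∃ c : ℝ, 0 < c ∧
    Measure.map X P =
      volume.withDensity (fun x => ENNReal.ofReal (c * (1 + x ^ 2 / ν) ^ (-((ν + 1) / 2))))

/-- Extension of a distortion function to `ℝ` by constants. -/
def gExt (g : ℝ → ℝ) : ℝ → ℝ := fun q => if q ≤ 0 then 0 else if 1 ≤ q then 1 else g q

open Classical in
/-- The Lebesgue–Stieltjes measure `dg` associated with (the right-continuous modification of)
the extension of a distortion function `g` to `ℝ`. -/
def lsMeasure (g : ℝ → ℝ) : Measure ℝ :=
  if h : Monotone (gExt g) then h.stieltjesFunction.measure else 0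


/-! ### Auxiliary lemmas for the main theorem -/

section StdNormal
open Filter Topology
open scoped ENNReal NNReal

lemma gauss_one_ne : (1 : NNReal) ≠ 0 := one_ne_zero

lemma N_fin (A : Set ℝ) : gaussianReal 0 1 A ≠ ⊤ := measure_ne_top _ _

lemma N_Ioc_pos {x y : ℝ} (h : x < y) : 0 < gaussianReal 0 1 (Ioc x y) := by
  rw [gaussianReal_apply 0 gauss_one_ne]
  rw [setLIntegral_pos_iff (measurable_gaussianPDF 0 1)]
  have hsupp : Function.support (gaussianPDF 0 1) = univ := by
    ext z
    simp [Function.support, (gaussianPDF_pos 0 gauss_one_ne z).ne']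
  rw [hsupp, univ_inter, Real.volume_Ioc]
  simp [h]

lemma N_singleton (x : ℝ) : gaussianReal 0 1 {x} = 0 := by
  rw [gaussianReal_apply 0 gauss_one_ne]
  apply setLIntegral_measure_zero
  simp

lemma sn_strictMono : StrictMono stdNormCdf := by
  intro x y hxy
  have h1 : gaussianReal 0 1 (Iic y) = gaussianReal 0 1 (Iic x) + gaussianReal 0 1 (Ioc x y) := by
    rw [← measure_union (Iic_disjoint_Ioc le_rfl) measurableSet_Ioc, Iic_union_Ioc_eq_Iic hxy.le]
  have h2 := N_Ioc_pos hxy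
  unfold stdNormCdf
  rw [h1, ENNReal.toReal_add (N_fin _) (N_fin _)]
  have := ENNReal.toReal_pos h2.ne' (N_fin _)
  linarith

lemma sn_lipschitz : LipschitzWith 1 stdNormCdf := by
  have key : ∀ x y : ℝ, x ≤ y → stdNormCdf y - stdNormCdf x ≤ y - x := by
    intro x y hxy
    have h1 : gaussianReal 0 1 (Iic y) = gaussianReal 0 1 (Iic x) + gaussianReal 0 1 (Ioc x y) := by
      rw [← measure_union (Iic_disjoint_Ioc le_rfl) measurableSet_Ioc, Iic_union_Ioc_eq_Iic hxy]
    have hb : gaussianReal 0 1 (Ioc x y) ≤ ENNReal.ofReal (y - x) := by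
      rw [gaussianReal_apply 0 gauss_one_ne]
      calc ∫⁻ z in Ioc x y, gaussianPDF 0 1 z ≤ ∫⁻ _ in Ioc x y, 1 := by
            apply setLIntegral_mono measurable_const
            intro z _
            unfold gaussianPDF gaussianPDFReal
            rw [show ((1:ℝ≥0∞)) = ENNReal.ofReal 1 by simp]
            apply ENNReal.ofReal_le_ofReal
            have h2pi : (1:ℝ) ≤ Real.sqrt (2 * Real.pi * (1:NNReal)) := by
              rw [show ((1:NNReal):ℝ) = 1 by simp, mul_one]
              rw [show (1:ℝ) = Real.sqrt 1 by simp]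
              apply Real.sqrt_le_sqrt
              nlinarith [Real.pi_gt_three]
            have hexp : Real.exp (-(z - 0)^2 / (2 * (1:NNReal))) ≤ 1 := by
              rw [Real.exp_le_one_iff]
              apply div_nonpos_of_nonpos_of_nonneg
              · simp [sq_nonneg]
              · positivity
            calc (Real.sqrt (2 * Real.pi * (1:NNReal)))⁻¹ * Real.exp (-(z - 0)^2 / (2 * (1:NNReal)))
                ≤ 1 * 1 := by
                  apply mul_le_mul _ hexp (Real.exp_nonneg _) zero_le_one
                  rw [inv_le_one_iff₀]; right; exact h2pi
              _ = 1 := by ring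
        _ = ENNReal.ofReal (y - x) := by
            rw [setLIntegral_const, one_mul, Real.volume_Ioc]
    unfold stdNormCdf
    rw [h1, ENNReal.toReal_add (N_fin _) (N_fin _)]
    have := ENNReal.toReal_le_of_le_ofReal (by linarith) hb
    linarith
  apply LipschitzWith.of_dist_le_mul
  intro x y
  rcases le_total x y with h | h
  · rw [Real.dist_eq, Real.dist_eq,
      abs_of_nonpos (by have := key x y h; have := sn_strictMono.monotone h; linarith :
        stdNormCdf x - stdNormCdf y ≤ 0), abs_of_nonpos (by linarith)]
    have := key x y h
    simp only [NNReal.coe_one, one_mul]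
    linarith
  · rw [Real.dist_eq, Real.dist_eq,
      abs_of_nonneg (by have := sn_strictMono.monotone h; linarith :
        (0:ℝ) ≤ stdNormCdf x - stdNormCdf y), abs_of_nonneg (by linarith)]
    have := key y x h
    simp only [NNReal.coe_one, one_mul]
    linarith

lemma sn_continuous : Continuous stdNormCdf := sn_lipschitz.continuous

lemma sn_add_Ioi (x : ℝ) :
    stdNormCdf x + ((gaussianReal 0 1) (Ioi x)).toReal = 1 := by
  have h : gaussianReal 0 1 (Iic x) + gaussianReal 0 1 (Ioi x) = 1 := by
    rw [← measure_union (Iic_disjoint_Ioi le_rfl) measurableSet_Ioi, Iic_union_Ioi,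
      measure_univ]
  unfold stdNormCdf
  rw [← ENNReal.toReal_add (N_fin _) (N_fin _), h, ENNReal.toReal_one]

lemma sn_lt_one (x : ℝ) : stdNormCdf x < 1 := by
  have h := sn_add_Ioi x
  have h2 : 0 < ((gaussianReal 0 1) (Ioi x)).toReal := by
    apply ENNReal.toReal_pos _ (N_fin _)
    have := N_Ioc_pos (show x < x+1 by linarith)
    intro h0
    exact absurd (measure_mono_null Ioc_subset_Ioi_self h0) this.ne'
  linarith

lemma sn_pos (x : ℝ) : 0 < stdNormCdf x := by
  have := N_Ioc_pos (show x - 1 < x by linarith)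
  apply ENNReal.toReal_pos _ (N_fin _)
  intro h0
  exact absurd (measure_mono_null Ioc_subset_Iic_self h0) this.ne'

lemma sn_map_neg : Measure.map (fun y : ℝ => -y) (gaussianReal 0 1) = gaussianReal 0 1 := by
  have h := gaussianReal_map_const_mul (μ := 0) (v := 1) (-1)
  have heq : (fun y : ℝ => -y) = (fun y : ℝ => (-1) * y) := by funext y; ring
  rw [heq, h]
  norm_num

lemma sn_neg (x : ℝ) : stdNormCdf (-x) = 1 - stdNormCdf x := by
  have h1 : gaussianReal 0 1 (Iic (-x)) = gaussianReal 0 1 (Ici x) := by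
    conv_rhs => rw [← sn_map_neg]
    rw [Measure.map_apply (measurable_neg) measurableSet_Ici]
    congr 1
    ext y
    simp
  have h2 : gaussianReal 0 1 (Ici x) = gaussianReal 0 1 (Ioi x) := by
    apply le_antisymm
    · calc gaussianReal 0 1 (Ici x) = gaussianReal 0 1 (Ioi x ∪ {x}) := by rw [Ioi_union_left]
        _ ≤ gaussianReal 0 1 (Ioi x) + gaussianReal 0 1 {x} := measure_union_le _ _
        _ = gaussianReal 0 1 (Ioi x) := by rw [N_singleton, add_zero]
    · exact measure_mono Ioi_subset_Ici_self
  have h3 := sn_add_Ioi x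
  unfold stdNormCdf
  rw [h1, h2]
  unfold stdNormCdf at h3
  linarith

lemma sn_tendsto_top : Tendsto stdNormCdf atTop (nhds 1) := by
  have h := tendsto_measure_Iic_atTop (gaussianReal 0 1)
  rw [measure_univ] at h
  have := (ENNReal.tendsto_toReal (by norm_num : (1:ℝ≥0∞) ≠ ⊤)).comp h
  simp only [ENNReal.toReal_one, Function.comp_def] at this
  exact this

lemma sn_exists_eq {p : ℝ} (hp : p ∈ Ioo (0:ℝ) 1) : ∃ x, stdNormCdf x = p := by
  obtain ⟨b, hb⟩ : ∃ b : ℝ, max p (1 - p) < stdNormCdf b := by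
    have hlt : max p (1 - p) < 1 := by
      rcases hp with ⟨h0, h1⟩
      rw [max_lt_iff]
      constructor <;> linarith
    exact (sn_tendsto_top.eventually (eventually_gt_nhds hlt)).exists
  have hab : stdNormCdf (-b) < p := by
    rw [sn_neg]
    linarith [lt_of_le_of_lt (le_max_right p (1-p)) hb]
  have hbb : p < stdNormCdf b := lt_of_le_of_lt (le_max_left _ _) hb
  have hle : -b ≤ b := by
    by_contra hcon
    push_neg at hcon
    have := sn_strictMono hcon
    linarith
  have := intermediate_value_Icc hle sn_continuous.continuousOn
  obtain ⟨x, _, hx⟩ := this ⟨hab.le, hbb.le⟩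
  exact ⟨x, hx⟩

lemma sn_inv_eq {p x₀ : ℝ} (h : stdNormCdf x₀ = p) : stdNormInv p = x₀ := by
  unfold stdNormInv
  have hset : {x | p ≤ stdNormCdf x} = Ici x₀ := by
    ext x
    simp only [mem_setOf_eq, mem_Ici, ← h]
    exact sn_strictMono.le_iff_le
  rw [hset, csInf_Ici]

lemma sn_cdf_inv {p : ℝ} (hp : p ∈ Ioo (0:ℝ) 1) : stdNormCdf (stdNormInv p) = p := by
  obtain ⟨x, hx⟩ := sn_exists_eq hp
  rw [sn_inv_eq hx, hx]

lemma sn_inv_lt_iff {p q : ℝ} (hp : p ∈ Ioo (0:ℝ) 1) (hq : q ∈ Ioo (0:ℝ) 1) :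
    stdNormInv p < stdNormInv q ↔ p < q := by
  rw [← sn_strictMono.lt_iff_lt, sn_cdf_inv hp, sn_cdf_inv hq]

lemma sn_inv_le_iff {p q : ℝ} (hp : p ∈ Ioo (0:ℝ) 1) (hq : q ∈ Ioo (0:ℝ) 1) :
    stdNormInv p ≤ stdNormInv q ↔ p ≤ q := by
  rw [← sn_strictMono.le_iff_le, sn_cdf_inv hp, sn_cdf_inv hq]

lemma sn_cdf_zero : stdNormCdf 0 = 1/2 := by
  have := sn_neg 0
  rw [neg_zero] at this
  linarith

lemma sn_inv_half : stdNormInv (1/2) = 0 := sn_inv_eq sn_cdf_zero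

lemma sn_inv_one_sub {p : ℝ} (hp : p ∈ Ioo (0:ℝ) 1) :
    stdNormInv (1 - p) = - stdNormInv p :=
  sn_inv_eq (by rw [sn_neg, sn_cdf_inv hp])

end StdNormal

section LogNormal

lemma gaussian_affine (μ σ : ℝ) (hσ : 0 < σ) :
    Measure.map (fun z => σ * z + μ) (gaussianReal 0 1)
      = gaussianReal μ (⟨σ ^ 2, sq_nonneg σ⟩ : NNReal) := by
  have h1 : Measure.map (fun z : ℝ => σ * z) (gaussianReal 0 1)
      = gaussianReal 0 (⟨σ ^ 2, sq_nonneg σ⟩ : NNReal) := by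
    rw [show (fun z : ℝ => σ * z) = (σ * ·) by rfl, gaussianReal_map_const_mul]
    norm_num
    rfl
  have h2 : Measure.map (fun z : ℝ => σ * z + μ) (gaussianReal 0 1)
      = Measure.map (· + μ) (Measure.map (fun z : ℝ => σ * z) (gaussianReal 0 1)) :=
    (Measure.map_map (measurable_add_const μ) (measurable_const_mul σ)).symm
  rw [h2, h1]
  exact (gaussianReal_map_add_const μ).trans (by rw [zero_add])

variable {Ω : Type*} [MeasurableSpace Ω]

lemma rvCdf_lognormal {P : Measure Ω} {X : Ω → ℝ} {μ σ : ℝ} (hσ : 0 < σ)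
    (hX : IsLogNormalRV P X μ σ) (x : ℝ) :
    rvCdf P X x = if 0 < x then stdNormCdf ((Real.log x - μ) / σ) else 0 := by
  have hmap : P {ω | X ω ≤ x} =
      Measure.map Real.exp (gaussianReal μ (⟨σ ^ 2, sq_nonneg σ⟩ : NNReal)) (Iic x) := by
    rw [← hX.2, Measure.map_apply hX.1 measurableSet_Iic]
    rfl
  rw [show (Measure.map Real.exp (gaussianReal μ (⟨σ ^ 2, sq_nonneg σ⟩ : NNReal)) (Iic x))
      = gaussianReal μ (⟨σ ^ 2, sq_nonneg σ⟩ : NNReal) (Real.exp ⁻¹' Iic x) from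
    Measure.map_apply Real.measurable_exp measurableSet_Iic] at hmap
  by_cases hx : 0 < x
  · have hpre : Real.exp ⁻¹' Iic x = Iic (Real.log x) := by
      ext z
      simp only [mem_preimage, mem_Iic]
      rw [← Real.le_log_iff_exp_le hx]
    have hIic : gaussianReal μ (⟨σ ^ 2, sq_nonneg σ⟩ : NNReal) (Iic (Real.log x))
        = gaussianReal 0 1 (Iic ((Real.log x - μ) / σ)) := by
      rw [← gaussian_affine μ σ hσ, Measure.map_apply (by fun_prop) measurableSet_Iic]
      congr 1
      ext z
      simp only [mem_preimage, mem_Iic]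
      rw [le_div_iff₀ hσ]
      constructor <;> intro h <;> nlinarith
    rw [if_pos hx]
    unfold rvCdf stdNormCdf
    rw [hmap, hpre, hIic]
  · have hpre : Real.exp ⁻¹' Iic x = ∅ := by
      ext z
      simp only [mem_preimage, mem_Iic, mem_empty_iff_false, iff_false, not_le]
      push_neg at hx
      exact lt_of_le_of_lt hx (Real.exp_pos z)
    rw [if_neg hx]
    unfold rvCdf
    rw [hmap, hpre, measure_empty]
    rfl

lemma leftInv_lognormal {P : Measure Ω} {X : Ω → ℝ} {μ σ : ℝ} (hσ : 0 < σ)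
    (hX : IsLogNormalRV P X μ σ) {p : ℝ} (hp : p ∈ Ioo (0:ℝ) 1) :
    leftInv (rvCdf P X) p = Real.exp (μ + σ * stdNormInv p) := by
  unfold leftInv
  have hset : {x | p ≤ rvCdf P X x} = Ici (Real.exp (μ + σ * stdNormInv p)) := by
    ext x
    simp only [mem_setOf_eq, mem_Ici]
    rw [rvCdf_lognormal hσ hX x]
    by_cases hx : 0 < x
    · rw [if_pos hx]
      constructor
      · intro h
        have h1 : stdNormInv p ≤ (Real.log x - μ) / σ := by
          rw [← sn_cdf_inv hp] at h
          exact sn_strictMono.le_iff_le.mp h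
        have h2 : μ + σ * stdNormInv p ≤ Real.log x := by
          rw [le_div_iff₀ hσ] at h1; nlinarith
        calc Real.exp (μ + σ * stdNormInv p) ≤ Real.exp (Real.log x) := Real.exp_le_exp.mpr h2
          _ = x := Real.exp_log hx
      · intro h
        have h2 : μ + σ * stdNormInv p ≤ Real.log x := (Real.le_log_iff_exp_le hx).mpr h
        have h1 : stdNormInv p ≤ (Real.log x - μ) / σ := by
          rw [le_div_iff₀ hσ]; nlinarith
        rw [← sn_cdf_inv hp]
        exact sn_strictMono.monotone h1
    · rw [if_neg hx]
      push_neg at hx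
      constructor
      · intro h; linarith [hp.1]
      · intro h
        exfalso
        have := Real.exp_pos (μ + σ * stdNormInv p)
        linarith
  rw [hset, csInf_Ici]

lemma leftInv_zero_of_nonpos {P : Measure Ω} {X : Ω → ℝ} {p : ℝ} (hp : p ≤ 0) :
    leftInv (rvCdf P X) p = 0 := by
  unfold leftInv
  have hset : {x | p ≤ rvCdf P X x} = univ := by
    ext x
    simp only [mem_setOf_eq, mem_univ, iff_true]
    exact le_trans hp ENNReal.toReal_nonneg
  rw [hset]
  exact Real.sInf_of_not_bddBelow not_bddBelow_univ

lemma leftInv_zero_of_ge_one {P : Measure Ω} {X : Ω → ℝ} {μ σ : ℝ} (hσ : 0 < σ)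
    (hX : IsLogNormalRV P X μ σ) {p : ℝ} (hp : 1 ≤ p) :
    leftInv (rvCdf P X) p = 0 := by
  unfold leftInv
  have hset : {x | p ≤ rvCdf P X x} = ∅ := by
    ext x
    simp only [mem_setOf_eq, mem_empty_iff_false, iff_false, not_le]
    rw [rvCdf_lognormal hσ hX x]
    by_cases hx : 0 < x
    · rw [if_pos hx]; linarith [sn_lt_one ((Real.log x - μ) / σ)]
    · rw [if_neg hx]; linarith
  rw [hset, Real.sInf_empty]

end LogNormal

section ValLemmas

lemma val_anti {μ σ : ℝ} (hσ : 0 < σ) {t s : ℝ} (h : t < s) (hs : s ≤ 0) :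
    Real.exp (μ + σ * s) + Real.exp (μ - σ * s)
      < Real.exp (μ + σ * t) + Real.exp (μ - σ * t) := by
  have hm : (0:ℝ) < Real.exp μ := Real.exp_pos μ
  have hp : (0:ℝ) < Real.exp (σ * t) := Real.exp_pos _
  have hq : (0:ℝ) < Real.exp (σ * s) := Real.exp_pos _
  have hpq : Real.exp (σ * t) < Real.exp (σ * s) := Real.exp_lt_exp.mpr (by nlinarith)
  have hq1 : Real.exp (σ * s) ≤ 1 := Real.exp_le_one_iff.mpr (by nlinarith)
  have e1 : Real.exp (μ + σ * s) = Real.exp μ * Real.exp (σ * s) := Real.exp_add μ (σ * s)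
  have e2 : Real.exp (μ - σ * s) = Real.exp μ / Real.exp (σ * s) := by
    rw [Real.exp_sub]
  have e3 : Real.exp (μ + σ * t) = Real.exp μ * Real.exp (σ * t) := Real.exp_add μ (σ * t)
  have e4 : Real.exp (μ - σ * t) = Real.exp μ / Real.exp (σ * t) := by
    rw [Real.exp_sub]
  have key : Real.exp (σ * t) + (Real.exp (σ * t))⁻¹ - (Real.exp (σ * s) + (Real.exp (σ * s))⁻¹)
      = (Real.exp (σ * s) - Real.exp (σ * t)) * (1 - Real.exp (σ * t) * Real.exp (σ * s))
        / (Real.exp (σ * t) * Real.exp (σ * s)) := by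
    field_simp
    ring
  have hkey : 0 < (Real.exp (σ * s) - Real.exp (σ * t))
      * (1 - Real.exp (σ * t) * Real.exp (σ * s))
      / (Real.exp (σ * t) * Real.exp (σ * s)) := by
    apply div_pos (mul_pos (by linarith) (by nlinarith)) (mul_pos hp hq)
  have hmul := mul_lt_mul_of_pos_left (show Real.exp (σ * s) + (Real.exp (σ * s))⁻¹
      < Real.exp (σ * t) + (Real.exp (σ * t))⁻¹ by linarith) hm
  rw [e1, e2, e3, e4, div_eq_mul_inv, div_eq_mul_inv]
  nlinarith [hmul]

lemma val_ge {μ σ t : ℝ} :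
    2 * Real.exp μ ≤ Real.exp (μ + σ * t) + Real.exp (μ - σ * t) := by
  have hm : (0:ℝ) < Real.exp μ := Real.exp_pos μ
  have hp : (0:ℝ) < Real.exp (σ * t) := Real.exp_pos _
  have e3 : Real.exp (μ + σ * t) = Real.exp μ * Real.exp (σ * t) := Real.exp_add μ (σ * t)
  have e4 : Real.exp (μ - σ * t) = Real.exp μ / Real.exp (σ * t) := by
    rw [Real.exp_sub]
  rw [e3, e4]
  rw [div_eq_mul_inv]
  have h1 : Real.exp (σ * t) + (Real.exp (σ * t))⁻¹ ≥ 2 := by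
    have h2 : Real.exp (σ * t) * (Real.exp (σ * t))⁻¹ = 1 := mul_inv_cancel₀ hp.ne'
    nlinarith [sq_nonneg (Real.exp (σ * t) - 1), inv_pos.mpr hp]
  nlinarith

end ValLemmas


/-- shape of the aggregate loss function of two identically distributed
log-normal risks, and the quantile of the counter-monotonic sum. -/
theorem lognormal_aggregate_loss_shape
    (P : Measure Ω) [IsProbabilityMeasure P]
    (X₁ X₂ U : Ω → ℝ) (μ σ : ℝ) (hσ : 0 < σ)
    (h₁ : IsLogNormalRV P X₁ μ σ) (h₂ : IsLogNormalRV P X₂ μ σ)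
    (hU : IsUniform01 P U)
    (φ : ℝ → ℝ)
    (hφ : ∀ u, φ u = leftInv (rvCdf P X₁) u + leftInv (rvCdf P X₂) (1 - u)) :
    (∀ u ∈ Ioo (0:ℝ) 1,
      φ u = leftInv (rvCdf P X₁) u + leftInv (rvCdf P X₁) (1 - u)) ∧
    (∀ u ∈ Ioo (0:ℝ) 1, φ u = φ (1 - u)) ∧
    StrictAntiOn φ (Ioo 0 (1/2)) ∧
    StrictMonoOn φ (Ioo (1/2) 1) ∧
    (∀ q ∈ Ioo (0:ℝ) 1,
      leftInv (rvCdf P (cmSum P X₁ X₂ U)) (1 - q) =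
        leftInv (rvCdf P X₁) (q / 2) + leftInv (rvCdf P X₁) (1 - q / 2)) := by
  obtain ⟨hU_meas, hU_map⟩ := hU
  have hm : (0:ℝ) < Real.exp μ := Real.exp_pos μ
  have hmapIic : ∀ (X : Ω → ℝ), Measurable X → ∀ x : ℝ,
      P {ω | X ω ≤ x} = Measure.map X P (Iic x) := by
    intro X hX x
    rw [Measure.map_apply hX measurableSet_Iic]
    rfl
  have hF2 : rvCdf P X₂ = rvCdf P X₁ := by
    funext x
    unfold rvCdf
    rw [hmapIic X₂ h₂.1, hmapIic X₁ h₁.1, h₂.2, h₁.2]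
  have hQ : ∀ p ∈ Ioo (0:ℝ) 1, leftInv (rvCdf P X₁) p = Real.exp (μ + σ * stdNormInv p) :=
    fun p hp => leftInv_lognormal hσ h₁ hp
  have hφval : ∀ u ∈ Ioo (0:ℝ) 1,
      φ u = Real.exp (μ + σ * stdNormInv u) + Real.exp (μ - σ * stdNormInv u) := by
    intro u hu
    have hu' : (1 - u) ∈ Ioo (0:ℝ) 1 := ⟨by linarith [hu.2], by linarith [hu.1]⟩
    rw [hφ u, hF2, hQ u hu, hQ _ hu', sn_inv_one_sub hu,
      show μ + σ * (-stdNormInv u) = μ - σ * stdNormInv u by ring]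
  have hsym : ∀ u ∈ Ioo (0:ℝ) 1, φ u = φ (1 - u) := by
    intro u hu
    have hu' : (1 - u) ∈ Ioo (0:ℝ) 1 := ⟨by linarith [hu.2], by linarith [hu.1]⟩
    rw [hφval u hu, hφval _ hu', sn_inv_one_sub hu,
      show μ + σ * (-stdNormInv u) = μ - σ * stdNormInv u by ring,
      show μ - σ * (-stdNormInv u) = μ + σ * stdNormInv u by ring, add_comm]
  have hanti : ∀ u v : ℝ, 0 < u → u < v → v ≤ 1/2 → φ v < φ u := by
    intro u v hu0 huv hv2
    have hu : u ∈ Ioo (0:ℝ) 1 := ⟨hu0, by linarith⟩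
    have hv : v ∈ Ioo (0:ℝ) 1 := ⟨by linarith, by linarith⟩
    have hz : stdNormInv u < stdNormInv v := (sn_inv_lt_iff hu hv).mpr huv
    have hz0 : stdNormInv v ≤ 0 := by
      have := (sn_inv_le_iff hv ⟨by norm_num, by norm_num⟩).mpr hv2
      rwa [sn_inv_half] at this
    rw [hφval u hu, hφval v hv]
    exact val_anti hσ hz hz0
  have hanti_le : ∀ u v : ℝ, 0 < u → u ≤ v → v ≤ 1/2 → φ v ≤ φ u := by
    intro u v hu0 huv hv2
    rcases eq_or_lt_of_le huv with rfl | h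
    · exact le_rfl
    · exact (hanti u v hu0 h hv2).le
  have hmin : ∀ u ∈ Ioo (0:ℝ) 1, 2 * Real.exp μ ≤ φ u := by
    intro u hu
    rw [hφval u hu]
    exact val_ge
  have hhalf : φ (1/2) = 2 * Real.exp μ := by
    rw [hφval (1/2) ⟨by norm_num, by norm_num⟩, sn_inv_half]
    simp only [mul_zero, add_zero, sub_zero]
    ring
  set S := cmSum P X₁ X₂ U with hSdef
  have hSφ : ∀ ω, S ω = φ (U ω) := by
    intro ω
    rw [hφ (U ω)]
    show leftInv (rvCdf P X₁) (U ω) + leftInv (rvCdf P X₂) (1 - U ω) = _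
    rfl
  have hφ0 : ∀ u : ℝ, u ≤ 0 ∨ 1 ≤ u → φ u = 0 := by
    intro u hu
    rw [hφ u, hF2]
    rcases hu with hu | hu
    · rw [leftInv_zero_of_nonpos hu,
        leftInv_zero_of_ge_one hσ h₁ (show (1:ℝ) ≤ 1 - u by linarith), add_zero]
    · rw [leftInv_zero_of_ge_one hσ h₁ hu,
        leftInv_zero_of_nonpos (show 1 - u ≤ 0 by linarith), add_zero]
  have hcdfS : ∀ (s : ℝ) (A : Set ℝ), MeasurableSet A → (∀ u, φ u ≤ s ↔ u ∈ A) →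
      rvCdf P S s = (volume (A ∩ Icc (0:ℝ) 1)).toReal := by
    intro s A hA hiff
    unfold rvCdf
    have hpre : {ω | S ω ≤ s} = U ⁻¹' A := by
      ext ω
      simp only [mem_setOf_eq, mem_preimage]
      rw [hSφ ω]
      exact hiff _
    rw [hpre, ← Measure.map_apply hU_meas hA, hU_map, Measure.restrict_apply hA]
  have hzero : ∀ s : ℝ, s < 2 * Real.exp μ → rvCdf P S s = 0 := by
    intro s hs
    by_cases hs0 : 0 ≤ s
    · have hiff : ∀ u, φ u ≤ s ↔ u ∈ (Iic (0:ℝ) ∪ Ici 1) := by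
        intro u
        simp only [mem_union, mem_Iic, mem_Ici]
        by_cases hu : u ≤ 0 ∨ 1 ≤ u
        · constructor
          · intro _; exact hu
          · intro _; rw [hφ0 u hu]; exact hs0
        · push_neg at hu
          have humem : u ∈ Ioo (0:ℝ) 1 := ⟨by linarith [hu.1], by linarith [hu.2]⟩
          constructor
          · intro h; exfalso; linarith [hmin u humem]
          · intro h
            exfalso
            rcases h with h | h
            · linarith [humem.1]
            · linarith [humem.2]
      rw [hcdfS s _ (measurableSet_Iic.union measurableSet_Ici) hiff]
      have hinter : (Iic (0:ℝ) ∪ Ici 1) ∩ Icc (0:ℝ) 1 = {0} ∪ {1} := by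
        ext u
        simp only [mem_inter_iff, mem_union, mem_Iic, mem_Ici, mem_Icc, mem_singleton_iff]
        constructor
        · rintro ⟨h1 | h1, h2, h3⟩
          · left; linarith
          · right; linarith
        · rintro (rfl | rfl) <;> norm_num
      rw [hinter]
      have hv0 : volume ({(0:ℝ)} ∪ {(1:ℝ)}) = 0 := by
        apply le_antisymm _ zero_le
        calc volume ({(0:ℝ)} ∪ {(1:ℝ)}) ≤ volume {(0:ℝ)} + volume {(1:ℝ)} :=
              measure_union_le _ _
          _ = 0 := by simp
      rw [hv0]
      simp
    · push_neg at hs0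
      have hiff : ∀ u, φ u ≤ s ↔ u ∈ (∅ : Set ℝ) := by
        intro u
        simp only [mem_empty_iff_false, iff_false, not_le]
        by_cases hu : u ≤ 0 ∨ 1 ≤ u
        · rw [hφ0 u hu]; linarith
        · push_neg at hu
          have humem : u ∈ Ioo (0:ℝ) 1 := ⟨by linarith [hu.1], by linarith [hu.2]⟩
          linarith [hmin u humem]
      rw [hcdfS s _ MeasurableSet.empty hiff]
      simp
  have hkey : ∀ s : ℝ, 2 * Real.exp μ ≤ s →
      ∃ a : ℝ, a ∈ Ioo (0:ℝ) 1 ∧ a ≤ 1/2 ∧ φ a = s ∧ rvCdf P S s = 1 - 2*a := by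
    intro s hs
    have hD : (0:ℝ) ≤ s^2 - 4*(Real.exp μ)^2 := by nlinarith
    set D := s^2 - 4*(Real.exp μ)^2 with hDdef
    have hDsq : Real.sqrt D ^ 2 = D := Real.sq_sqrt hD
    have hsD : Real.sqrt D < s := by
      have h1 : Real.sqrt D < Real.sqrt (s^2) := Real.sqrt_lt_sqrt hD (by nlinarith)
      rwa [Real.sqrt_sq (by nlinarith)] at h1
    set y := (s - Real.sqrt D)/2 with hydef
    have hy0 : 0 < y := by rw [hydef]; linarith
    have hym : y ≤ Real.exp μ := by
      have h2 : s - 2*Real.exp μ ≤ Real.sqrt D := by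
        rcases le_or_gt (s - 2*Real.exp μ) 0 with h | h
        · exact le_trans h (Real.sqrt_nonneg D)
        · rw [show Real.sqrt D = Real.sqrt D from rfl, ← Real.sqrt_sq h.le]
          apply Real.sqrt_le_sqrt
          nlinarith
      rw [hydef]; linarith
    have hquad : y * (s - y) = (Real.exp μ)^2 := by
      rw [hydef]
      nlinarith [hDsq]
    set t := (Real.log y - μ)/σ with htdef
    have ht1 : Real.exp (μ + σ * t) = y := by
      rw [show μ + σ * t = Real.log y by rw [htdef]; field_simp; ring, Real.exp_log hy0]
    have ht2 : Real.exp (μ - σ * t) = (Real.exp μ)^2 / y := by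
      have hprod : Real.exp (μ - σ * t) * Real.exp (μ + σ * t) = (Real.exp μ)^2 := by
        rw [← Real.exp_add, show μ - σ*t + (μ + σ*t) = μ + μ by ring, Real.exp_add, sq]
      rw [ht1] at hprod
      rw [eq_div_iff hy0.ne']
      exact hprod
    have ht0 : t ≤ 0 := by
      rw [htdef]
      apply div_nonpos_of_nonpos_of_nonneg _ hσ.le
      have hlog := Real.log_le_log hy0 hym
      rw [Real.log_exp] at hlog
      linarith
    set a := stdNormCdf t with hadef
    have ha_mem : a ∈ Ioo (0:ℝ) 1 := ⟨sn_pos t, sn_lt_one t⟩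
    have ha_half : a ≤ 1/2 := by
      rw [hadef, ← sn_cdf_zero]
      exact sn_strictMono.monotone ht0
    have hza : stdNormInv a = t := sn_inv_eq rfl
    have hφa : φ a = s := by
      rw [hφval a ha_mem, hza, ht1, ht2]
      field_simp
      nlinarith [hquad]
    have h1a : a ≤ 1 - a := by linarith
    have hiff : ∀ u, φ u ≤ s ↔ u ∈ (Iic (0:ℝ) ∪ Icc a (1-a) ∪ Ici 1) := by
      intro u
      simp only [mem_union, mem_Iic, mem_Icc, mem_Ici]
      by_cases hu : u ≤ 0 ∨ 1 ≤ u
      · constructor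
        · intro _
          rcases hu with h | h
          · exact Or.inl (Or.inl h)
          · exact Or.inr h
        · intro _
          rw [hφ0 u hu]
          linarith
      · push_neg at hu
        have humem : u ∈ Ioo (0:ℝ) 1 := ⟨by linarith [hu.1], by linarith [hu.2]⟩
        constructor
        · intro h
          refine Or.inl (Or.inr ⟨?_, ?_⟩)
          · by_contra hc
            push_neg at hc
            have := hanti u a humem.1 hc ha_half
            rw [hφa] at this
            linarith
          · by_contra hc
            push_neg at hc
            have h1u : 1 - u < a := by linarith
            have h1u0 : 0 < 1 - u := by linarith [humem.2]
            have := hanti (1-u) a h1u0 h1u ha_half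
            rw [hφa, ← hsym u humem] at this
            linarith
        · intro h
          have h' : a ≤ u ∧ u ≤ 1 - a := by
            rcases h with (h | h) | h
            · exfalso; linarith [humem.1]
            · exact h
            · exfalso; linarith [humem.2]
          rcases le_or_gt u (1/2) with hu2 | hu2
          · have := hanti_le a u ha_mem.1 h'.1 hu2
            rw [hφa] at this
            linarith
          · have := hanti_le a (1-u) ha_mem.1 (by linarith [h'.2]) (by linarith)
            rw [hφa, ← hsym u humem] at this
            linarith
    have hmeas : MeasurableSet (Iic (0:ℝ) ∪ Icc a (1-a) ∪ Ici 1) :=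
      (measurableSet_Iic.union measurableSet_Icc).union measurableSet_Ici
    have hvol : volume ((Iic (0:ℝ) ∪ Icc a (1-a) ∪ Ici 1) ∩ Icc (0:ℝ) 1)
        = ENNReal.ofReal (1 - 2*a) := by
      have hIccvol : volume (Icc a (1-a)) = ENNReal.ofReal (1 - 2*a) := by
        rw [Real.volume_Icc]
        congr 1
        ring
      apply le_antisymm
      · have hsub : (Iic (0:ℝ) ∪ Icc a (1-a) ∪ Ici 1) ∩ Icc (0:ℝ) 1
            ⊆ {0} ∪ (Icc a (1-a) ∪ {1}) := by
          rintro u ⟨h1, h2⟩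
          simp only [mem_union, mem_Iic, mem_Icc, mem_Ici, mem_singleton_iff] at h1 ⊢
          rw [mem_Icc] at h2
          rcases h1 with (h | h) | h
          · exact Or.inl (le_antisymm h h2.1)
          · exact Or.inr (Or.inl h)
          · exact Or.inr (Or.inr (le_antisymm h2.2 h))
        calc volume ((Iic (0:ℝ) ∪ Icc a (1-a) ∪ Ici 1) ∩ Icc (0:ℝ) 1)
            ≤ volume ({0} ∪ (Icc a (1-a) ∪ {1})) := measure_mono hsub
          _ ≤ volume {(0:ℝ)} + volume (Icc a (1-a) ∪ {(1:ℝ)}) := measure_union_le _ _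
          _ ≤ volume {(0:ℝ)} + (volume (Icc a (1-a)) + volume {(1:ℝ)}) :=
              add_le_add le_rfl (measure_union_le _ _)
          _ = volume (Icc a (1-a)) := by simp
          _ = ENNReal.ofReal (1 - 2*a) := hIccvol
      · rw [← hIccvol]
        apply measure_mono
        intro u hu'
        rw [mem_Icc] at hu'
        refine ⟨?_, ?_⟩
        · simp only [mem_union]
          exact Or.inl (Or.inr (by rw [mem_Icc]; exact hu'))
        · rw [mem_Icc]
          constructor
          · linarith [hu'.1, ha_mem.1]
          · linarith [hu'.2, ha_mem.1]
    refine ⟨a, ha_mem, ha_half, hφa, ?_⟩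
    rw [hcdfS s _ hmeas hiff, hvol, ENNReal.toReal_ofReal (by linarith)]
  refine ⟨?_, hsym, ?_, ?_, ?_⟩
  · intro u _
    rw [hφ u, hF2]
  · intro u hu v hv huv
    exact hanti u v hu.1 huv hv.2.le
  · intro u hu v hv huv
    have humem : u ∈ Ioo (0:ℝ) 1 := ⟨by linarith [hu.1], hu.2⟩
    have hvmem : v ∈ Ioo (0:ℝ) 1 := ⟨by linarith [hv.1], hv.2⟩
    rw [hsym u humem, hsym v hvmem]
    exact hanti (1-v) (1-u) (by linarith [hv.2]) (by linarith) (by linarith [hu.1])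
  · intro q hq
    have hq2 : q/2 ∈ Ioo (0:ℝ) 1 := ⟨by linarith [hq.1], by linarith [hq.2]⟩
    set t₀ := leftInv (rvCdf P X₁) (q/2) + leftInv (rvCdf P X₁) (1 - q/2) with ht₀def
    have hφq : φ (q/2) = t₀ := by rw [hφ (q/2), hF2]
    have ht₀gt : 2 * Real.exp μ < t₀ := by
      rw [← hφq, ← hhalf]
      exact hanti (q/2) (1/2) hq2.1 (by linarith [hq.2]) le_rfl
    have hset : {s | 1 - q ≤ rvCdf P S s} = Ici t₀ := by
      ext s
      simp only [mem_setOf_eq, mem_Ici]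
      constructor
      · intro h
        by_contra hc
        push_neg at hc
        rcases lt_or_ge s (2*Real.exp μ) with h2 | h2
        · rw [hzero s h2] at h
          linarith [hq.2]
        · obtain ⟨b, hb_mem, hb_half, hφb, hcdf⟩ := hkey s h2
          rw [hcdf] at h
          have hb : b ≤ q/2 := by linarith
          have hle : φ (q/2) ≤ φ b := hanti_le b (q/2) hb_mem.1 hb (by linarith [hq.2])
          rw [hφb, hφq] at hle
          linarith
      · intro h
        have h2 : 2*Real.exp μ ≤ s := by linarith
        obtain ⟨b, hb_mem, hb_half, hφb, hcdf⟩ := hkey s h2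
        rw [hcdf]
        have hb : b ≤ q/2 := by
          by_contra hc
          push_neg at hc
          have := hanti (q/2) b hq2.1 hc hb_half
          rw [hφb, hφq] at this
          linarith
        linarith
    show leftInv (rvCdf P S) (1 - q) = t₀
    unfold leftInv
    rw [hset, csInf_Ici]


end
end

section
/- Let (X₁, X₂) be a pair of identically distributed log-normal random variables, X₁ ≍ X₂ ~ LN(μ, σ²), and let S⁻ be their counter-monotonic sum. Then for every p ∈ (0,1), TVaR_p[S⁻] = (2 e^{μ + σ²/2}/(1 − p)) · [Φ(Φ^{-1}((1−p)/2) − σ) + Φ(Φ^{-1}((1−p)/2) + σ)], where Φ is the standard normal cdf and Φ^{-1} its inverse. -/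
open MeasureTheory ProbabilityTheory Set
open scoped ENNReal NNReal

noncomputable section

variable {Ω : Type*} [MeasurableSpace Ω]

namespace Aux

local notation "γ" => gaussianReal 0 1

lemma one_ne : (1 : NNReal) ≠ 0 := one_ne_zero

lemma gauss_pos {s : Set ℝ} (hs : MeasurableSet s) (h : 0 < volume s) : 0 < γ s := by
  rw [gaussianReal_apply 0 one_ne s]
  rw [lintegral_pos_iff_support ((measurable_gaussianPDF 0 1))]
  have : Function.support (gaussianPDF 0 1) = univ := by
    ext x; simp [Function.mem_support, (gaussianPDF_pos 0 one_ne x).ne']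
  rw [this]
  rwa [Measure.restrict_apply_univ]

lemma gauss_ne_top (s : Set ℝ) : γ s ≠ ⊤ := measure_ne_top _ _

lemma stdNormCdf_mono : Monotone stdNormCdf := fun x y hxy => by
  unfold stdNormCdf
  exact ENNReal.toReal_mono (gauss_ne_top _) (measure_mono (Iic_subset_Iic.2 hxy))

lemma stdNormCdf_strictMono : StrictMono stdNormCdf := by
  intro x y hxy
  unfold stdNormCdf
  have hsplit : Iic y = Iic x ∪ Ioc x y := (Iic_union_Ioc_eq_Iic hxy.le).symm
  have hdisj : Disjoint (Iic x) (Ioc x y) := by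
    rw [disjoint_left]; rintro a ha ⟨h1, h2⟩; exact absurd ha (not_le.2 h1)
  rw [hsplit, measure_union hdisj measurableSet_Ioc]
  have hpos : 0 < γ (Ioc x y) := gauss_pos measurableSet_Ioc (by simp [hxy])
  have h1 := gauss_ne_top (Iic x)
  have h2 := gauss_ne_top (Ioc x y)
  rw [ENNReal.toReal_add h1 h2]
  have : 0 < (γ (Ioc x y)).toReal := ENNReal.toReal_pos hpos.ne' h2
  linarith

lemma pdf_le_one (t : ℝ) : gaussianPDFReal 0 1 t ≤ 1 := by
  unfold gaussianPDFReal
  have h1 : Real.exp (-(t - 0) ^ 2 / (2 * ((1:NNReal) : ℝ))) ≤ 1 := by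
    rw [Real.exp_le_one_iff]
    have : (0:ℝ) ≤ (t - 0)^2 := sq_nonneg _
    simp only [NNReal.coe_one]
    nlinarith
  have h2 : ((Real.sqrt (2 * Real.pi * ((1:NNReal):ℝ)))⁻¹ : ℝ) ≤ 1 := by
    simp only [NNReal.coe_one, mul_one]
    rw [inv_le_one_iff₀]
    right
    have : (1:ℝ) ≤ 2 * Real.pi := by nlinarith [Real.pi_gt_three]
    nlinarith [Real.sq_sqrt (by positivity : (0:ℝ) ≤ 2 * Real.pi),
      Real.sqrt_nonneg (2 * Real.pi)]
  have h3 : (0:ℝ) ≤ Real.exp (-(t - 0) ^ 2 / (2 * ((1:NNReal):ℝ))) := (Real.exp_pos _).le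
  calc (Real.sqrt (2 * Real.pi * ((1:NNReal):ℝ)))⁻¹ * Real.exp (-(t - 0) ^ 2 / (2 * ((1:NNReal):ℝ)))
      ≤ 1 * 1 := by
        apply mul_le_mul h2 h1 h3 zero_le_one
    _ = 1 := one_mul 1

lemma stdNormCdf_sub_le {x y : ℝ} (hxy : x ≤ y) : stdNormCdf y - stdNormCdf x ≤ y - x := by
  have hsplit : Iic y = Iic x ∪ Ioc x y := (Iic_union_Ioc_eq_Iic hxy).symm
  have hdisj : Disjoint (Iic x) (Ioc x y) := by
    rw [disjoint_left]; rintro a ha ⟨h1, h2⟩; exact absurd ha (not_le.2 h1)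
  have hb : γ (Ioc x y) ≤ ENNReal.ofReal (y - x) := by
    rw [gaussianReal_apply 0 one_ne]
    calc ∫⁻ t in Ioc x y, gaussianPDF 0 1 t
        ≤ ∫⁻ _ in Ioc x y, 1 := by
          apply lintegral_mono
          intro t
          unfold gaussianPDF
          calc ENNReal.ofReal (gaussianPDFReal 0 1 t) ≤ ENNReal.ofReal 1 :=
                ENNReal.ofReal_le_ofReal (pdf_le_one t)
            _ = 1 := ENNReal.ofReal_one
      _ = ENNReal.ofReal (y - x) := by
          rw [setLIntegral_one, Real.volume_Ioc]
  unfold stdNormCdf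
  rw [hsplit, measure_union hdisj measurableSet_Ioc,
    ENNReal.toReal_add (gauss_ne_top _) (gauss_ne_top _)]
  have := ENNReal.toReal_mono (by simp) hb
  rw [ENNReal.toReal_ofReal (by linarith)] at this
  linarith

lemma stdNormCdf_continuous : Continuous stdNormCdf := by
  apply LipschitzWith.continuous (K := 1)
  apply LipschitzWith.of_dist_le_mul
  intro x y
  rw [NNReal.coe_one, one_mul, Real.dist_eq, Real.dist_eq]
  rcases le_total x y with h | h
  · have h1 := stdNormCdf_sub_le h
    have h2 := stdNormCdf_mono h
    rw [abs_of_nonpos (by linarith), abs_of_nonpos (by linarith)]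
    linarith
  · have h1 := stdNormCdf_sub_le h
    have h2 := stdNormCdf_mono h
    rw [abs_of_nonneg (by linarith), abs_of_nonneg (by linarith)]
    linarith

lemma stdNormCdf_pos (x : ℝ) : 0 < stdNormCdf x :=
  ENNReal.toReal_pos (gauss_pos measurableSet_Iic (by simp) ).ne' (gauss_ne_top _)

lemma stdNormCdf_lt_one (x : ℝ) : stdNormCdf x < 1 := by
  have hIoi : 0 < γ (Ioi x) := gauss_pos measurableSet_Ioi (by simp)
  have hc : γ (Iic x) + γ (Ioi x) = 1 := by
    rw [← measure_union (by rw [disjoint_left]; rintro a ha h2; exact absurd (mem_Iic.1 ha) (not_le.2 (mem_Ioi.1 h2))) measurableSet_Ioi,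
      Iic_union_Ioi, measure_univ]
  have h1 : γ (Iic x) < 1 := by
    by_contra h
    push_neg at h
    have h2 : γ (Iic x) = 1 := le_antisymm (prob_le_one) h
    rw [h2] at hc
    have : γ (Ioi x) = 0 := by
      have h3 : (1 : ENNReal) + γ (Ioi x) = 1 + 0 := by rw [hc, add_zero]
      exact (ENNReal.add_right_inj ENNReal.one_ne_top).1 h3
    exact absurd this hIoi.ne'
  unfold stdNormCdf
  calc (γ (Iic x)).toReal < (1 : ENNReal).toReal := by
        apply (ENNReal.toReal_lt_toReal (gauss_ne_top _) ENNReal.one_ne_top).2 h1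
    _ = 1 := by simp

lemma stdNormCdf_mem_Ioo (x : ℝ) : stdNormCdf x ∈ Ioo (0:ℝ) 1 :=
  ⟨stdNormCdf_pos x, stdNormCdf_lt_one x⟩

lemma stdNormCdf_tendsto_atTop : Filter.Tendsto stdNormCdf Filter.atTop (nhds 1) := by
  have h := tendsto_measure_Iic_atTop (μ := γ)
  rw [show (γ univ) = 1 from measure_univ] at h
  have := (ENNReal.tendsto_toReal ENNReal.one_ne_top).comp h
  show Filter.Tendsto (fun x => (γ (Iic x)).toReal) _ _
  simpa [Function.comp_def] using this

lemma stdNormCdf_tendsto_atBot : Filter.Tendsto stdNormCdf Filter.atBot (nhds 0) := by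
  have h := tendsto_measure_iInter_atBot (μ := γ) (s := fun x : ℝ => Iic x)
    (fun i => measurableSet_Iic.nullMeasurableSet) (fun a b hab => Iic_subset_Iic.2 hab)
    ⟨0, gauss_ne_top _⟩
  have h0 : (⋂ x : ℝ, Iic x) = (∅ : Set ℝ) := by
    ext t; simp only [mem_iInter, mem_Iic, mem_empty_iff_false, iff_false, not_forall, not_le]
    exact ⟨t - 1, by linarith⟩
  rw [h0, measure_empty] at h
  have := (ENNReal.tendsto_toReal (by simp : (0:ENNReal) ≠ ⊤)).comp h
  show Filter.Tendsto (fun x => (γ (Iic x)).toReal) _ _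
  simpa [Function.comp_def] using this

lemma exists_stdNormCdf_eq {q : ℝ} (hq : q ∈ Ioo (0:ℝ) 1) : ∃ t, stdNormCdf t = q := by
  obtain ⟨q0, q1⟩ := hq
  have ha : ∃ a, stdNormCdf a < q := by
    have := stdNormCdf_tendsto_atBot.eventually_lt_const q0
    exact this.exists
  have hb : ∃ b, q < stdNormCdf b := by
    have := stdNormCdf_tendsto_atTop.eventually_const_lt q1
    exact this.exists
  obtain ⟨a, ha⟩ := ha
  obtain ⟨b, hb⟩ := hb
  have hab : a ≤ b := by
    by_contra h
    push_neg at h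
    exact absurd (stdNormCdf_mono h.le) (by linarith)
  have := intermediate_value_Icc hab stdNormCdf_continuous.continuousOn
  have hmem : q ∈ Icc (stdNormCdf a) (stdNormCdf b) := ⟨ha.le, hb.le⟩
  obtain ⟨t, _, ht⟩ := this hmem
  exact ⟨t, ht⟩

lemma stdNormCdf_stdNormInv {q : ℝ} (hq : q ∈ Ioo (0:ℝ) 1) : stdNormCdf (stdNormInv q) = q := by
  obtain ⟨t, ht⟩ := exists_stdNormCdf_eq hq
  have hle : IsLeast {x | q ≤ stdNormCdf x} t := by
    constructor
    · exact le_of_eq ht.symm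
    · intro x hx
      by_contra h
      push_neg at h
      have := stdNormCdf_strictMono h
      rw [ht] at this
      exact absurd hx (not_le.2 this)
  have : stdNormInv q = t := hle.csInf_eq
  rw [this, ht]

lemma stdNormInv_le_iff {q x : ℝ} (hq : q ∈ Ioo (0:ℝ) 1) :
    stdNormInv q ≤ x ↔ q ≤ stdNormCdf x := by
  constructor
  · intro h
    calc q = stdNormCdf (stdNormInv q) := (stdNormCdf_stdNormInv hq).symm
      _ ≤ stdNormCdf x := stdNormCdf_mono h
  · intro h
    by_contra hc
    push_neg at hc
    have := stdNormCdf_strictMono hc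
    rw [stdNormCdf_stdNormInv hq] at this
    exact absurd h (not_le.2 this)

lemma stdNormInv_strictMonoOn : StrictMonoOn stdNormInv (Ioo (0:ℝ) 1) := by
  intro a ha b hb hab
  by_contra h
  push_neg at h
  have := stdNormCdf_mono h
  rw [stdNormCdf_stdNormInv ha, stdNormCdf_stdNormInv hb] at this
  exact absurd this (not_le.2 hab)

lemma stdNormInv_stdNormCdf (x : ℝ) : stdNormInv (stdNormCdf x) = x := by
  have hle : IsLeast {y | stdNormCdf x ≤ stdNormCdf y} x := by
    constructor
    · show stdNormCdf x ≤ stdNormCdf x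
      exact le_rfl
    · intro y hy
      by_contra h
      push_neg at h
      exact absurd hy (not_le.2 (stdNormCdf_strictMono h))
  exact hle.csInf_eq

lemma gauss_singleton (x : ℝ) : γ {x} = 0 := by
  rw [gaussianReal_apply 0 one_ne]
  rw [show volume.restrict {x} = 0 from by
    ext s hs
    rw [Measure.restrict_apply hs]
    exact measure_mono_null inter_subset_right (Real.volume_singleton)]
  simp

lemma gauss_Iio (x : ℝ) : γ (Iio x) = γ (Iic x) := by
  exact measure_congr (Iio_ae_eq_Iic' (gauss_singleton x))

lemma gauss_neg_map : Measure.map (fun x : ℝ => -x) γ = γ := by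
  have h := gaussianReal_map_const_mul (μ := 0) (v := 1) (-1)
  have : (fun x : ℝ => -x) = (fun x : ℝ => (-1) * x) := by funext x; ring
  rw [this]
  convert h using 2
  · ring
  · ext
    simp

lemma stdNormCdf_neg (x : ℝ) : stdNormCdf (-x) = 1 - stdNormCdf x := by
  have h1 : γ (Iic (-x)) = γ (Ici x) := by
    calc γ (Iic (-x)) = (Measure.map (fun x : ℝ => -x) γ) (Iic (-x)) := by rw [gauss_neg_map]
      _ = γ ((fun x : ℝ => -x) ⁻¹' (Iic (-x))) :=
          Measure.map_apply measurable_neg measurableSet_Iic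
      _ = γ (Ici x) := by
          congr 1
          ext t; simp only [mem_preimage, mem_Iic, neg_le_neg_iff, mem_Ici]
  have h2 : γ (Iio x) + γ (Ici x) = 1 := by
    rw [← measure_union (by rw [disjoint_left]; rintro a ha h2; exact absurd (mem_Iio.1 ha) (not_lt.2 (mem_Ici.1 h2))) measurableSet_Ici,
      Iio_union_Ici, measure_univ]
  rw [gauss_Iio] at h2
  have h3 : (γ (Iic x)).toReal + (γ (Ici x)).toReal = 1 := by
    rw [← ENNReal.toReal_add (gauss_ne_top _) (gauss_ne_top _), h2, ENNReal.toReal_one]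
  unfold stdNormCdf
  rw [h1]
  linarith

lemma gauss_rep {mu sigma : ℝ} (hs : 0 < sigma) :
    gaussianReal mu (⟨sigma ^ 2, sq_nonneg sigma⟩ : NNReal) =
      Measure.map (fun x => sigma * x + mu) γ := by
  have h1 : Measure.map (fun x : ℝ => sigma * x) γ
      = gaussianReal 0 (⟨sigma ^ 2, sq_nonneg sigma⟩ : NNReal) := by
    have := gaussianReal_map_const_mul (μ := 0) (v := 1) sigma
    rw [mul_zero, mul_one] at this
    exact this
  have h2 := gaussianReal_map_add_const (μ := 0)
    (v := (⟨sigma ^ 2, sq_nonneg sigma⟩ : NNReal)) mu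
  rw [zero_add] at h2
  rw [← h2, ← h1, Measure.map_map (by fun_prop) (by fun_prop)]
  rfl

lemma gauss_affine_Iic {mu sigma : ℝ} (hs : 0 < sigma) (y : ℝ) :
    ((gaussianReal mu (⟨sigma ^ 2, sq_nonneg sigma⟩ : NNReal)) (Iic y)).toReal
      = stdNormCdf ((y - mu) / sigma) := by
  rw [gauss_rep hs,
    Measure.map_apply (by fun_prop) measurableSet_Iic]
  unfold stdNormCdf
  congr 2
  ext x
  simp only [mem_preimage, mem_Iic]
  rw [le_div_iff₀ hs]
  constructor
  · intro h; linarith [mul_comm sigma x]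
  · intro h; nlinarith [mul_comm sigma x]

variable {P : Measure Ω} [IsProbabilityMeasure P] {X : Ω → ℝ} {mu sigma : ℝ}

lemma lognormal_cdf (hs : 0 < sigma) (h : IsLogNormalRV P X mu sigma) (x : ℝ) :
    rvCdf P X x = if 0 < x then stdNormCdf ((Real.log x - mu) / sigma) else 0 := by
  have hset : {ω | X ω ≤ x} = X ⁻¹' (Iic x) := rfl
  have h1 : P {ω | X ω ≤ x} = (Measure.map X P) (Iic x) := by
    rw [Measure.map_apply h.1 measurableSet_Iic, hset]
  have h2 : (Measure.map X P) (Iic x)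
      = (gaussianReal mu (⟨sigma ^ 2, sq_nonneg sigma⟩ : NNReal)) (Real.exp ⁻¹' Iic x) := by
    rw [h.2, Measure.map_apply Real.measurable_exp measurableSet_Iic]
  unfold rvCdf
  rw [h1, h2]
  by_cases hx : 0 < x
  · rw [if_pos hx]
    have hpre : Real.exp ⁻¹' Iic x = Iic (Real.log x) := by
      ext t
      simp only [mem_preimage, mem_Iic]
      exact (Real.le_log_iff_exp_le hx).symm
    rw [hpre, gauss_affine_Iic hs]
  · rw [if_neg hx]
    have hpre : Real.exp ⁻¹' Iic x = (∅ : Set ℝ) := by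
      ext t
      simp only [mem_preimage, mem_Iic, mem_empty_iff_false, iff_false, not_le]
      exact lt_of_le_of_lt (not_lt.1 hx) (Real.exp_pos t)
    rw [hpre, measure_empty, ENNReal.toReal_zero]

lemma lognormal_cdf_lt_one (hs : 0 < sigma) (h : IsLogNormalRV P X mu sigma) (x : ℝ) :
    rvCdf P X x < 1 := by
  rw [lognormal_cdf hs h]
  split
  · exact stdNormCdf_lt_one _
  · norm_num

lemma lognormal_cdf_nonneg (x : ℝ) : 0 ≤ rvCdf P X x := ENNReal.toReal_nonneg

lemma lognormal_leftInv (hs : 0 < sigma) (h : IsLogNormalRV P X mu sigma)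
    {q : ℝ} (hq : q ∈ Ioo (0:ℝ) 1) :
    leftInv (rvCdf P X) q = Real.exp (mu + sigma * stdNormInv q) := by
  have hleast : IsLeast {x | q ≤ rvCdf P X x} (Real.exp (mu + sigma * stdNormInv q)) := by
    constructor
    · show q ≤ rvCdf P X _
      rw [lognormal_cdf hs h, if_pos (Real.exp_pos _), Real.log_exp]
      have : (mu + sigma * stdNormInv q - mu) / sigma = stdNormInv q := by
        field_simp
        ring
      rw [this, stdNormCdf_stdNormInv hq]
    · intro x hx
      have hx' : q ≤ rvCdf P X x := hx
      rw [lognormal_cdf hs h] at hx'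
      by_cases hpos : 0 < x
      · rw [if_pos hpos] at hx'
        have h1 : stdNormInv q ≤ (Real.log x - mu) / sigma := (stdNormInv_le_iff hq).2 hx'
        have h2 : mu + sigma * stdNormInv q ≤ Real.log x := by
          rw [le_div_iff₀ hs] at h1
          nlinarith [mul_comm sigma (stdNormInv q)]
        calc Real.exp (mu + sigma * stdNormInv q) ≤ Real.exp (Real.log x) := Real.exp_le_exp.2 h2
          _ = x := Real.exp_log hpos
      · rw [if_neg hpos] at hx'
        linarith [hq.1]
  exact hleast.csInf_eq

lemma lognormal_leftInv_of_nonpos {q : ℝ} (hq : q ≤ 0) :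
    leftInv (rvCdf P X) q = 0 := by
  have : {x | q ≤ rvCdf P X x} = univ := by
    ext x
    simp only [mem_setOf_eq, mem_univ, iff_true]
    exact hq.trans (lognormal_cdf_nonneg x)
  unfold leftInv
  rw [this]
  exact Real.sInf_of_not_bddBelow (fun ⟨c, hc⟩ => by
    have := hc (mem_univ (c - 1))
    linarith)

lemma lognormal_leftInv_of_one_le (hs : 0 < sigma) (h : IsLogNormalRV P X mu sigma)
    {q : ℝ} (hq : 1 ≤ q) :
    leftInv (rvCdf P X) q = 0 := by
  have : {x | q ≤ rvCdf P X x} = (∅ : Set ℝ) := by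
    ext x
    simp only [mem_setOf_eq, mem_empty_iff_false, iff_false, not_le]
    exact lt_of_lt_of_le (lognormal_cdf_lt_one hs h x) hq
  unfold leftInv
  rw [this]
  exact Real.sInf_empty

lemma stdNormCdf_zero : stdNormCdf 0 = 1/2 := by
  have := stdNormCdf_neg 0
  rw [neg_zero] at this
  linarith

lemma stdNormInv_one_sub {q : ℝ} (hq : q ∈ Ioo (0:ℝ) 1) :
    stdNormInv (1 - q) = - stdNormInv q := by
  have h1 : stdNormCdf (- stdNormInv q) = 1 - q := by
    rw [stdNormCdf_neg, stdNormCdf_stdNormInv hq]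
  calc stdNormInv (1 - q) = stdNormInv (stdNormCdf (- stdNormInv q)) := by rw [h1]
    _ = - stdNormInv q := stdNormInv_stdNormCdf _

section CM

variable {X₁ X₂ U : Ω → ℝ}

/-- abbreviation for the quantile sum function -/
def gfun (mu sigma : ℝ) : ℝ → ℝ := fun b => 2 * Real.exp mu * Real.cosh (sigma * b)

lemma gfun_eq (mu sigma b : ℝ) :
    gfun mu sigma b = Real.exp (mu + sigma * b) + Real.exp (mu - sigma * b) := by
  unfold gfun
  rw [Real.cosh_eq]
  rw [Real.exp_add, show mu - sigma * b = mu + -(sigma*b) by ring, Real.exp_add]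
  ring

lemma gfun_pos (mu sigma b : ℝ) : 0 < gfun mu sigma b := by
  unfold gfun
  positivity

lemma two_exp_le_gfun (mu sigma b : ℝ) : 2 * Real.exp mu ≤ gfun mu sigma b := by
  unfold gfun
  nlinarith [Real.one_le_cosh (sigma * b), Real.exp_pos mu]

lemma gfun_le_gfun {mu sigma : ℝ} (hs : 0 < sigma) {x b : ℝ} (hb : 0 ≤ b) :
    gfun mu sigma x ≤ gfun mu sigma b ↔ |x| ≤ b := by
  unfold gfun
  rw [mul_le_mul_iff_of_pos_left (by positivity), Real.cosh_le_cosh, abs_mul, abs_mul,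
    abs_of_pos hs, abs_of_nonneg hb, mul_le_mul_iff_of_pos_left hs]

lemma psi_eq (hs : 0 < sigma) (h₁ : IsLogNormalRV P X₁ mu sigma)
    (h₂ : IsLogNormalRV P X₂ mu sigma) (u : ℝ) :
    leftInv (rvCdf P X₁) u + leftInv (rvCdf P X₂) (1 - u)
      = if u ∈ Ioo (0:ℝ) 1 then gfun mu sigma (stdNormInv u) else 0 := by
  by_cases hu : u ∈ Ioo (0:ℝ) 1
  · rw [if_pos hu]
    have hu' : 1 - u ∈ Ioo (0:ℝ) 1 := ⟨by linarith [hu.2], by linarith [hu.1]⟩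
    rw [lognormal_leftInv hs h₁ hu, lognormal_leftInv hs h₂ hu',
      stdNormInv_one_sub hu, gfun_eq]
    ring_nf
  · rw [if_neg hu]
    simp only [mem_Ioo, not_and_or, not_lt] at hu
    rcases hu with hu | hu
    · rw [lognormal_leftInv_of_nonpos hu, lognormal_leftInv_of_one_le hs h₂ (by linarith)]
      ring
    · rw [lognormal_leftInv_of_one_le hs h₁ hu, lognormal_leftInv_of_nonpos (by linarith)]
      ring

lemma cm_set_eq (hs : 0 < sigma) (h₁ : IsLogNormalRV P X₁ mu sigma)
    (h₂ : IsLogNormalRV P X₂ mu sigma) {b : ℝ} (hb : 0 ≤ b) :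
    {ω | cmSum P X₁ X₂ U ω ≤ gfun mu sigma b}
      = U ⁻¹' (Icc (stdNormCdf (-b)) (stdNormCdf b) ∪ (Ioo (0:ℝ) 1)ᶜ) := by
  ext ω
  simp only [mem_setOf_eq, mem_preimage, mem_union, mem_Icc, mem_compl_iff]
  unfold cmSum
  rw [psi_eq hs h₁ h₂]
  by_cases hu : U ω ∈ Ioo (0:ℝ) 1
  · rw [if_pos hu]
    constructor
    · intro h
      left
      rw [gfun_le_gfun hs hb, abs_le] at h
      constructor
      · have : -b ≤ stdNormInv (U ω) := h.1
        calc stdNormCdf (-b) ≤ stdNormCdf (stdNormInv (U ω)) := stdNormCdf_mono this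
          _ = U ω := stdNormCdf_stdNormInv hu
      · have : stdNormInv (U ω) ≤ b := h.2
        calc U ω = stdNormCdf (stdNormInv (U ω)) := (stdNormCdf_stdNormInv hu).symm
          _ ≤ stdNormCdf b := stdNormCdf_mono this
    · rintro (⟨hl, hr⟩ | h)
      · rw [gfun_le_gfun hs hb, abs_le]
        constructor
        · by_contra hc
          push_neg at hc
          have := stdNormCdf_strictMono hc
          rw [stdNormCdf_stdNormInv hu] at this
          exact absurd hl (not_le.2 this)
        · exact (stdNormInv_le_iff hu).2 hr
      · exact absurd hu h
  · rw [if_neg hu]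
    constructor
    · intro _; right; exact hu
    · intro _; exact (gfun_pos mu sigma b).le

lemma cmSum_cdf_g (hU : IsUniform01 P U) (hs : 0 < sigma)
    (h₁ : IsLogNormalRV P X₁ mu sigma) (h₂ : IsLogNormalRV P X₂ mu sigma)
    {b : ℝ} (hb : 0 ≤ b) :
    rvCdf P (cmSum P X₁ X₂ U) (gfun mu sigma b) = 2 * stdNormCdf b - 1 := by
  unfold rvCdf
  rw [cm_set_eq hs h₁ h₂ hb]
  have hmeas : MeasurableSet (Icc (stdNormCdf (-b)) (stdNormCdf b) ∪ (Ioo (0:ℝ) 1)ᶜ) :=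
    measurableSet_Icc.union measurableSet_Ioo.compl
  rw [← Measure.map_apply hU.1 hmeas, hU.2, Measure.restrict_apply hmeas]
  have hsub : ((Ioo (0:ℝ) 1)ᶜ) ∩ Icc 0 1 = {0, 1} := by
    ext t
    simp only [mem_inter_iff, mem_compl_iff, mem_Ioo, mem_Icc, not_and_or, not_lt,
      mem_insert_iff, mem_singleton_iff]
    constructor
    · rintro ⟨h | h, h0, h1⟩
      · left; linarith
      · right; linarith
    · rintro (h | h) <;> subst h <;> norm_num
  have hIccsub : Icc (stdNormCdf (-b)) (stdNormCdf b) ⊆ Icc 0 1 := by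
    intro t ht
    exact ⟨le_trans (stdNormCdf_pos _).le ht.1, le_trans ht.2 (stdNormCdf_lt_one _).le⟩
  have hset : (Icc (stdNormCdf (-b)) (stdNormCdf b) ∪ (Ioo (0:ℝ) 1)ᶜ) ∩ Icc 0 1
      = Icc (stdNormCdf (-b)) (stdNormCdf b) ∪ {0, 1} := by
    rw [union_inter_distrib_right, hsub, inter_eq_self_of_subset_left hIccsub]
  rw [hset]
  have hnull : volume ({0, 1} : Set ℝ) = 0 := by
    apply le_antisymm _ zero_le
    calc volume ({0, 1} : Set ℝ) ≤ volume ({0} : Set ℝ) + volume ({1} : Set ℝ) :=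
          measure_union_le _ _
      _ = 0 := by rw [Real.volume_singleton, Real.volume_singleton, add_zero]
  have hle : stdNormCdf (-b) ≤ stdNormCdf b := stdNormCdf_mono (by linarith)
  have : volume (Icc (stdNormCdf (-b)) (stdNormCdf b) ∪ {0, 1})
      = volume (Icc (stdNormCdf (-b)) (stdNormCdf b)) := by
    apply le_antisymm
    · calc volume (Icc (stdNormCdf (-b)) (stdNormCdf b) ∪ {0, 1})
          ≤ volume (Icc (stdNormCdf (-b)) (stdNormCdf b)) + volume ({0,1} : Set ℝ) :=
            measure_union_le _ _
        _ = volume (Icc (stdNormCdf (-b)) (stdNormCdf b)) := by rw [hnull, add_zero]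
    · exact measure_mono subset_union_left
  rw [this, Real.volume_Icc, ENNReal.toReal_ofReal (by linarith), stdNormCdf_neg]
  ring

lemma gfun_continuous (mu sigma : ℝ) : Continuous (gfun mu sigma) := by
  unfold gfun
  continuity

lemma exists_gfun_eq {mu sigma x : ℝ} (hs : 0 < sigma) (hx : 2 * Real.exp mu ≤ x) :
    ∃ b, 0 ≤ b ∧ gfun mu sigma b = x := by
  set B := max 0 ((Real.log x - mu) / sigma) with hB
  have hB0 : 0 ≤ B := le_max_left _ _
  have hxpos : 0 < x := lt_of_lt_of_le (by positivity) hx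
  have hgB : x ≤ gfun mu sigma B := by
    rw [gfun_eq]
    have h1 : Real.log x - mu ≤ sigma * B := by
      have : (Real.log x - mu) / sigma ≤ B := le_max_right _ _
      calc Real.log x - mu = sigma * ((Real.log x - mu) / sigma) := by field_simp
        _ ≤ sigma * B := by
            apply mul_le_mul_of_nonneg_left this hs.le
    calc x = Real.exp (Real.log x) := (Real.exp_log hxpos).symm
      _ ≤ Real.exp (mu + sigma * B) := Real.exp_le_exp.2 (by linarith)
      _ ≤ Real.exp (mu + sigma * B) + Real.exp (mu - sigma * B) := by
          linarith [Real.exp_pos (mu - sigma * B)]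
  have hg0 : gfun mu sigma 0 = 2 * Real.exp mu := by
    unfold gfun
    rw [mul_zero, Real.cosh_zero, mul_one]
  have := intermediate_value_Icc hB0 (gfun_continuous mu sigma).continuousOn
  have hmem : x ∈ Icc (gfun mu sigma 0) (gfun mu sigma B) := by
    rw [hg0]; exact ⟨hx, hgB⟩
  obtain ⟨b, hb, hgb⟩ := this hmem
  exact ⟨b, hb.1, hgb⟩

lemma gfun_lt_gfun {mu sigma : ℝ} (hs : 0 < sigma) {x b : ℝ} (hx : 0 ≤ x) (hb : 0 ≤ b)
    (h : gfun mu sigma x < gfun mu sigma b) : x < b := by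
  by_contra hc
  push_neg at hc
  have : gfun mu sigma b ≤ gfun mu sigma x :=
    (gfun_le_gfun (mu := mu) hs hx (x := b)).2 (by rwa [abs_of_nonneg hb])
  exact absurd h (not_lt.2 this)

lemma cmSum_cdf_lt_min (hU : IsUniform01 P U) (hs : 0 < sigma)
    (h₁ : IsLogNormalRV P X₁ mu sigma) (h₂ : IsLogNormalRV P X₂ mu sigma)
    {x : ℝ} (hx : x < 2 * Real.exp mu) :
    rvCdf P (cmSum P X₁ X₂ U) x = 0 := by
  unfold rvCdf
  have hset : {ω | cmSum P X₁ X₂ U ω ≤ x} = U ⁻¹' (if 0 ≤ x then (Ioo (0:ℝ) 1)ᶜ else ∅) := by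
    ext ω
    simp only [mem_setOf_eq, mem_preimage]
    unfold cmSum
    rw [psi_eq hs h₁ h₂]
    by_cases hu : U ω ∈ Ioo (0:ℝ) 1
    · rw [if_pos hu]
      have hgt : x < gfun mu sigma (stdNormInv (U ω)) :=
        lt_of_lt_of_le hx (two_exp_le_gfun _ _ _)
      constructor
      · intro h; linarith
      · intro h
        split at h
        · exact absurd hu h
        · exact absurd h (notMem_empty _)
    · rw [if_neg hu]
      constructor
      · intro h
        have h0 : (0:ℝ) ≤ x := h
        rw [if_pos h0]
        exact hu
      · intro h
        split at h
        · assumption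
        · exact absurd h (notMem_empty _)
  rw [hset]
  split
  · have hmeas : MeasurableSet ((Ioo (0:ℝ) 1)ᶜ) := measurableSet_Ioo.compl
    rw [← Measure.map_apply hU.1 hmeas, hU.2, Measure.restrict_apply hmeas]
    have hsub : ((Ioo (0:ℝ) 1)ᶜ) ∩ Icc 0 1 ⊆ {0, 1} := by
      intro t
      simp only [mem_inter_iff, mem_compl_iff, mem_Ioo, mem_Icc, not_and_or, not_lt,
        mem_insert_iff, mem_singleton_iff]
      rintro ⟨h | h, h0, h1⟩
      · left; linarith
      · right; linarith
    have hnull : volume ({0, 1} : Set ℝ) = 0 := by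
      apply le_antisymm _ zero_le
      calc volume ({0, 1} : Set ℝ) ≤ volume ({0} : Set ℝ) + volume ({1} : Set ℝ) :=
            measure_union_le _ _
        _ = 0 := by rw [Real.volume_singleton, Real.volume_singleton, add_zero]
    rw [measure_mono_null hsub hnull, ENNReal.toReal_zero]
  · rw [preimage_empty, measure_empty, ENNReal.toReal_zero]

lemma cmSum_leftInv (hU : IsUniform01 P U) (hs : 0 < sigma)
    (h₁ : IsLogNormalRV P X₁ mu sigma) (h₂ : IsLogNormalRV P X₂ mu sigma)
    {q : ℝ} (hq : q ∈ Ioo (0:ℝ) 1) :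
    leftInv (rvCdf P (cmSum P X₁ X₂ U)) q = gfun mu sigma (stdNormInv ((1 + q) / 2)) := by
  have hmid : (1 + q) / 2 ∈ Ioo (0:ℝ) 1 := ⟨by linarith [hq.1], by linarith [hq.2]⟩
  set b := stdNormInv ((1 + q) / 2) with hbdef
  have hb : 0 ≤ b := by
    have h0 : stdNormInv (1/2) = 0 := by
      rw [← stdNormCdf_zero, stdNormInv_stdNormCdf]
    have hlt : (1:ℝ)/2 < (1 + q) / 2 := by linarith [hq.1]
    have := stdNormInv_strictMonoOn (by norm_num : (1:ℝ)/2 ∈ Ioo (0:ℝ) 1) hmid hlt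
    rw [h0] at this
    exact this.le
  have hcdfb : rvCdf P (cmSum P X₁ X₂ U) (gfun mu sigma b) = q := by
    rw [cmSum_cdf_g hU hs h₁ h₂ hb, hbdef, stdNormCdf_stdNormInv hmid]
    ring
  have hleast : IsLeast {x | q ≤ rvCdf P (cmSum P X₁ X₂ U) x} (gfun mu sigma b) := by
    constructor
    · show q ≤ _
      rw [hcdfb]
    · intro x hx
      have hx' : q ≤ rvCdf P (cmSum P X₁ X₂ U) x := hx
      by_contra hc
      push_neg at hc
      by_cases hxe : 2 * Real.exp mu ≤ x
      · obtain ⟨b', hb', hgb'⟩ := exists_gfun_eq hs hxe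
        rw [← hgb'] at hx' hc
        rw [cmSum_cdf_g hU hs h₁ h₂ hb'] at hx'
        have hblt : b' < b := gfun_lt_gfun hs hb' hb hc
        have := stdNormCdf_strictMono hblt
        have hq2 : stdNormCdf b = (1 + q) / 2 := by
          rw [hbdef, stdNormCdf_stdNormInv hmid]
        rw [hq2] at this
        linarith
      · push_neg at hxe
        rw [cmSum_cdf_lt_min hU hs h₁ h₂ hxe] at hx'
        linarith [hq.1]
  exact hleast.csInf_eq

end CM

section Integration

lemma stdNormInv_of_nonpos {q : ℝ} (hq : q ≤ 0) : stdNormInv q = 0 := by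
  have : {x | q ≤ stdNormCdf x} = univ := by
    ext x
    simp only [mem_setOf_eq, mem_univ, iff_true]
    exact hq.trans (stdNormCdf_pos x).le
  unfold stdNormInv
  rw [this]
  exact Real.sInf_of_not_bddBelow (fun ⟨c, hc⟩ => by
    have := hc (mem_univ (c - 1))
    linarith)

lemma stdNormInv_of_one_le {q : ℝ} (hq : 1 ≤ q) : stdNormInv q = 0 := by
  have : {x | q ≤ stdNormCdf x} = (∅ : Set ℝ) := by
    ext x
    simp only [mem_setOf_eq, mem_empty_iff_false, iff_false, not_le]
    exact lt_of_lt_of_le (stdNormCdf_lt_one x) hq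
  unfold stdNormInv
  rw [this]
  exact Real.sInf_empty

lemma stdNormInv_preimage_Iic (t : ℝ) :
    {u : ℝ | stdNormInv u ≤ t}
      = (Ioo (0:ℝ) 1 ∩ Iic (stdNormCdf t)) ∪ (if 0 ≤ t then (Ioo (0:ℝ) 1)ᶜ else ∅) := by
  ext u
  simp only [mem_setOf_eq, mem_union, mem_inter_iff, mem_Iic, mem_compl_iff]
  by_cases hu : u ∈ Ioo (0:ℝ) 1
  · constructor
    · intro h
      left
      exact ⟨hu, (stdNormInv_le_iff hu).1 h⟩
    · rintro (⟨_, h⟩ | h)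
      · exact (stdNormInv_le_iff hu).2 h
      · split at h
        · exact absurd hu h
        · exact absurd h (notMem_empty _)
  · have h0 : stdNormInv u = 0 := by
      simp only [mem_Ioo, not_and_or, not_lt] at hu
      rcases hu with h | h
      · exact stdNormInv_of_nonpos h
      · exact stdNormInv_of_one_le h
    rw [h0]
    constructor
    · intro h
      right
      rw [if_pos h]
      exact hu
    · rintro (⟨h, _⟩ | h)
      · exact absurd h hu
      · split at h
        · assumption
        · exact absurd h (notMem_empty _)

lemma stdNormInv_measurable : Measurable stdNormInv := by
  apply measurable_of_Iic
  intro t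
  rw [show stdNormInv ⁻¹' Iic t = {u : ℝ | stdNormInv u ≤ t} from rfl,
    stdNormInv_preimage_Iic]
  apply MeasurableSet.union
  · exact measurableSet_Ioo.inter measurableSet_Iic
  · split
    · exact measurableSet_Ioo.compl
    · exact MeasurableSet.empty

lemma map_stdNormInv :
    Measure.map stdNormInv (volume.restrict (Ioo (0:ℝ) 1)) = γ := by
  have hprob : IsFiniteMeasure (Measure.map stdNormInv (volume.restrict (Ioo (0:ℝ) 1))) := by
    constructor
    rw [Measure.map_apply stdNormInv_measurable MeasurableSet.univ]
    rw [preimage_univ, Measure.restrict_apply MeasurableSet.univ, univ_inter, Real.volume_Ioo]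
    norm_num
  apply Measure.ext_of_Iic
  intro t
  rw [Measure.map_apply stdNormInv_measurable measurableSet_Iic]
  rw [show stdNormInv ⁻¹' Iic t = {u : ℝ | stdNormInv u ≤ t} from rfl,
    stdNormInv_preimage_Iic]
  have hmeas : MeasurableSet ((Ioo (0:ℝ) 1 ∩ Iic (stdNormCdf t)) ∪ (if 0 ≤ t then (Ioo (0:ℝ) 1)ᶜ else ∅)) := by
    apply MeasurableSet.union (measurableSet_Ioo.inter measurableSet_Iic)
    split
    · exact measurableSet_Ioo.compl
    · exact MeasurableSet.empty
  rw [Measure.restrict_apply hmeas]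
  have hint : ((Ioo (0:ℝ) 1 ∩ Iic (stdNormCdf t)) ∪ (if 0 ≤ t then (Ioo (0:ℝ) 1)ᶜ else ∅)) ∩ Ioo 0 1
      = Ioc 0 (stdNormCdf t) := by
    rw [union_inter_distrib_right]
    have h1 : (if 0 ≤ t then (Ioo (0:ℝ) 1)ᶜ else ∅) ∩ Ioo 0 1 = ∅ := by
      split
      · rw [compl_inter_self]
      · rw [empty_inter]
    rw [h1, union_empty]
    ext u
    simp only [mem_inter_iff, mem_Ioo, mem_Iic, mem_Ioc]
    constructor
    · rintro ⟨⟨⟨h0, _⟩, h2⟩, _⟩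
      exact ⟨h0, h2⟩
    · rintro ⟨h0, h2⟩
      have hu1 : u < 1 := lt_of_le_of_lt h2 (stdNormCdf_lt_one t)
      exact ⟨⟨⟨h0, hu1⟩, h2⟩, h0, hu1⟩
  rw [hint, Real.volume_Ioc]
  have : γ (Iic t) = ENNReal.ofReal (stdNormCdf t) := by
    unfold stdNormCdf
    rw [ENNReal.ofReal_toReal (gauss_ne_top _)]
  rw [this, sub_zero]

lemma prob_toReal_Ioi {m : Measure ℝ} [IsProbabilityMeasure m] (a : ℝ) :
    (m (Ioi a)).toReal = 1 - (m (Iic a)).toReal := by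
  have h : m (Iic a) + m (Ioi a) = 1 := by
    rw [← measure_union (by rw [disjoint_left]; rintro t ht h2; exact absurd (mem_Iic.1 ht) (not_le.2 (mem_Ioi.1 h2)))
      measurableSet_Ioi, Iic_union_Ioi, measure_univ]
  have := congrArg ENNReal.toReal h
  rw [ENNReal.toReal_add (measure_ne_top _ _) (measure_ne_top _ _), ENNReal.toReal_one] at this
  linarith

lemma gauss_shift_Iic (c a : ℝ) :
    ((gaussianReal c 1) (Iic a)).toReal = stdNormCdf (a - c) := by
  have h := gaussianReal_map_add_const (μ := 0) (v := 1) c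
  rw [zero_add] at h
  rw [← h, Measure.map_apply (f := fun x : ℝ => x + c) (by fun_prop) measurableSet_Iic]
  unfold stdNormCdf
  congr 2
  ext x
  simp only [mem_preimage, mem_Iic, id_eq]
  constructor <;> intro <;> linarith

lemma pdf_shift (muv c x : ℝ) :
    gaussianPDFReal 0 1 x * Real.exp (muv + c * x)
      = Real.exp (muv + c ^ 2 / 2) * gaussianPDFReal c 1 x := by
  unfold gaussianPDFReal
  rw [NNReal.coe_one]
  conv_rhs => rw [mul_comm, mul_assoc, ← Real.exp_add]
  conv_lhs => rw [mul_assoc, ← Real.exp_add]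
  congr 1
  ring

lemma gauss_tail (muv c a : ℝ) :
    ∫ x in Ioi a, Real.exp (muv + c * x) ∂γ
      = Real.exp (muv + c ^ 2 / 2) * (1 - stdNormCdf (a - c)) := by
  have hγ : γ = volume.withDensity (fun x => ((gaussianPDFReal 0 1 x).toNNReal : ℝ≥0∞)) := by
    rw [gaussianReal_of_var_ne_zero 0 one_ne]
    rfl
  have hmeas : Measurable (fun x => (gaussianPDFReal 0 1 x).toNNReal) :=
    (measurable_gaussianPDFReal 0 1).real_toNNReal
  rw [hγ, setIntegral_withDensity_eq_setIntegral_smul hmeas _ measurableSet_Ioi]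
  have hpt : ∀ x : ℝ, (gaussianPDFReal 0 1 x).toNNReal • Real.exp (muv + c * x)
      = Real.exp (muv + c ^ 2 / 2) * gaussianPDFReal c 1 x := by
    intro x
    rw [NNReal.smul_def, Real.coe_toNNReal _ (gaussianPDFReal_nonneg 0 1 x)]
    exact pdf_shift muv c x
  simp_rw [hpt]
  rw [integral_const_mul]
  congr 1
  have happ := gaussianReal_apply_eq_integral c one_ne (Ioi a)
  have hnn : 0 ≤ ∫ x in Ioi a, gaussianPDFReal c 1 x :=
    integral_nonneg (fun x => gaussianPDFReal_nonneg c 1 x)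
  have : ((gaussianReal c 1) (Ioi a)).toReal = ∫ x in Ioi a, gaussianPDFReal c 1 x := by
    rw [happ, ENNReal.toReal_ofReal hnn]
  rw [← this, prob_toReal_Ioi, gauss_shift_Iic]

lemma integral_comp_stdNormInv {p' : ℝ} (hp' : p' ∈ Ioo (0:ℝ) 1) (f : ℝ → ℝ)
    (hf : Continuous f) :
    ∫ r in p'..1, f (stdNormInv r) = ∫ x in Ioi (stdNormInv p'), f x ∂γ := by
  set a := stdNormInv p' with ha
  rw [intervalIntegral.integral_of_le hp'.2.le, integral_Ioc_eq_integral_Ioo]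
  have hsub : Ioo p' 1 ∩ Ioo (0:ℝ) 1 = Ioo p' 1 := by
    apply inter_eq_self_of_subset_left
    intro t ht
    exact ⟨lt_trans hp'.1 ht.1, ht.2⟩
  have hres : volume.restrict (Ioo p' 1)
      = (volume.restrict (Ioo (0:ℝ) 1)).restrict (Ioo p' 1) := by
    rw [Measure.restrict_restrict measurableSet_Ioo, hsub]
  rw [show ∫ r in Ioo p' 1, f (stdNormInv r) ∂volume
      = ∫ r in Ioo p' 1, f (stdNormInv r) ∂(volume.restrict (Ioo (0:ℝ) 1)) from by
    rw [← hres]]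
  rw [← integral_indicator measurableSet_Ioo]
  have hcongr : ∀ᵐ r ∂(volume.restrict (Ioo (0:ℝ) 1)),
      (Ioo p' 1).indicator (fun r => f (stdNormInv r)) r
        = (Ioi a).indicator f (stdNormInv r) := by
    filter_upwards [ae_restrict_mem measurableSet_Ioo] with r hr
    by_cases hrp : p' < r
    · have hr1 : r ∈ Ioo p' 1 := ⟨hrp, hr.2⟩
      have hinv : a < stdNormInv r := stdNormInv_strictMonoOn hp' hr hrp
      rw [indicator_of_mem hr1, indicator_of_mem (show stdNormInv r ∈ Ioi a from hinv)]
    · push_neg at hrp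
      have hr1 : r ∉ Ioo p' 1 := fun h => absurd h.1 (not_lt.2 hrp)
      have hinv : stdNormInv r ∉ Ioi a := by
        simp only [mem_Ioi, not_lt]
        exact (stdNormInv_strictMonoOn.monotoneOn) hr hp' hrp
      rw [indicator_of_notMem hr1, indicator_of_notMem hinv]
  rw [integral_congr_ae hcongr]
  have hsm : AEStronglyMeasurable ((Ioi a).indicator f)
      (Measure.map stdNormInv (volume.restrict (Ioo (0:ℝ) 1))) :=
    (hf.measurable.indicator measurableSet_Ioi).aestronglyMeasurable
  rw [← integral_map stdNormInv_measurable.aemeasurable hsm, map_stdNormInv,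
    integral_indicator measurableSet_Ioi]

lemma exp_add_exp_continuous (muv c : ℝ) :
    Continuous (fun x : ℝ => Real.exp (muv + c * x) + Real.exp (muv - c * x)) := by
  continuity

lemma gauss_tail_sum (muv c a : ℝ) :
    ∫ x in Ioi a, (Real.exp (muv + c * x) + Real.exp (muv - c * x)) ∂γ
      = Real.exp (muv + c ^ 2 / 2)
          * ((1 - stdNormCdf (a - c)) + (1 - stdNormCdf (a + c))) := by
  have hγ : γ = volume.withDensity (fun x => ((gaussianPDFReal 0 1 x).toNNReal : ℝ≥0∞)) := by
    rw [gaussianReal_of_var_ne_zero 0 one_ne]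
    rfl
  have hmeas : Measurable (fun x => (gaussianPDFReal 0 1 x).toNNReal) :=
    (measurable_gaussianPDFReal 0 1).real_toNNReal
  rw [hγ, setIntegral_withDensity_eq_setIntegral_smul hmeas _ measurableSet_Ioi]
  have hpt : ∀ x : ℝ, (gaussianPDFReal 0 1 x).toNNReal
        • (Real.exp (muv + c * x) + Real.exp (muv - c * x))
      = Real.exp (muv + c ^ 2 / 2) * gaussianPDFReal c 1 x
        + Real.exp (muv + c ^ 2 / 2) * gaussianPDFReal (-c) 1 x := by
    intro x
    rw [NNReal.smul_def, Real.coe_toNNReal _ (gaussianPDFReal_nonneg 0 1 x), smul_eq_mul, mul_add]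
    congr 1
    · exact pdf_shift muv c x
    · have h1 : muv - c * x = muv + (-c) * x := by ring
      have h2 : muv + c ^ 2 / 2 = muv + (-c) ^ 2 / 2 := by ring
      rw [h1, h2]
      exact pdf_shift muv (-c) x
  simp_rw [hpt]
  rw [integral_add
    (((integrable_gaussianPDFReal c 1).restrict (s := Ioi a)).const_mul _)
    (((integrable_gaussianPDFReal (-c) 1).restrict (s := Ioi a)).const_mul _),
    integral_const_mul, integral_const_mul, ← mul_add]
  congr 1
  have key : ∀ d : ℝ, ∫ x in Ioi a, gaussianPDFReal d 1 x = 1 - stdNormCdf (a - d) := by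
    intro d
    have happ := gaussianReal_apply_eq_integral d one_ne (Ioi a)
    have hnn : 0 ≤ ∫ x in Ioi a, gaussianPDFReal d 1 x :=
      integral_nonneg (fun x => gaussianPDFReal_nonneg d 1 x)
    have heq : ((gaussianReal d 1) (Ioi a)).toReal = ∫ x in Ioi a, gaussianPDFReal d 1 x := by
      rw [happ, ENNReal.toReal_ofReal hnn]
    rw [← heq, prob_toReal_Ioi, gauss_shift_Iic]
  rw [key c, key (-c)]
  ring_nf

end Integration

end Aux

/-- TVaR of the counter-monotonic sum of two identically distributed
log-normal risks. -/
theorem lognormal_cm_sum_TVaR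
    (P : Measure Ω) [IsProbabilityMeasure P]
    (X₁ X₂ U : Ω → ℝ) (μ σ : ℝ) (hσ : 0 < σ)
    (h₁ : IsLogNormalRV P X₁ μ σ) (h₂ : IsLogNormalRV P X₂ μ σ)
    (hU : IsUniform01 P U)
    (p : ℝ) (hp : p ∈ Ioo (0:ℝ) 1) :
    TVaR P (cmSum P X₁ X₂ U) p =
      2 * Real.exp (μ + σ ^ 2 / 2) / (1 - p) *
        (stdNormCdf (stdNormInv ((1 - p) / 2) - σ) +
          stdNormCdf (stdNormInv ((1 - p) / 2) + σ)) := by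

  obtain ⟨hp0, hp1⟩ := hp
  set p' : ℝ := (1 + p) / 2 with hp'def
  have hp' : p' ∈ Ioo (0:ℝ) 1 := ⟨by rw [hp'def]; linarith, by rw [hp'def]; linarith⟩
  set a : ℝ := stdNormInv p' with hadef
  -- Step 1: rewrite the quantile function of the counter-monotonic sum
  have hstep1 : ∫ q in p..1, leftInv (rvCdf P (cmSum P X₁ X₂ U)) q
      = ∫ q in p..1, Aux.gfun μ σ (stdNormInv ((1 + q) / 2)) := by
    apply intervalIntegral.integral_congr_ae
    have h1 : ∀ᵐ x : ℝ ∂volume, x ≠ 1 := by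
      rw [ae_iff]
      have : {x : ℝ | ¬ x ≠ 1} = {1} := by ext x; simp
      rw [this, Real.volume_singleton]
    filter_upwards [h1] with q hq hmem
    rw [uIoc_of_le hp1.le] at hmem
    have hq' : q ∈ Ioo (0:ℝ) 1 :=
      ⟨lt_trans hp0 hmem.1, lt_of_le_of_ne hmem.2 hq⟩
    exact Aux.cmSum_leftInv hU hσ h₁ h₂ hq'
  -- Step 2: linear substitution
  have hstep2 : ∫ q in p..1, Aux.gfun μ σ (stdNormInv ((1 + q) / 2))
      = 2 * ∫ r in p'..1, Aux.gfun μ σ (stdNormInv r) := by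
    have e1 : (fun q : ℝ => Aux.gfun μ σ (stdNormInv ((1 + q) / 2)))
        = fun q : ℝ => (fun y : ℝ => Aux.gfun μ σ (stdNormInv (y / 2))) (q + 1) := by
      funext q
      have : (1 + q) / 2 = (q + 1) / 2 := by ring
      rw [this]
    rw [e1, intervalIntegral.integral_comp_add_right
      (fun y : ℝ => Aux.gfun μ σ (stdNormInv (y / 2))) 1]
    rw [intervalIntegral.integral_comp_div (a := p + 1) (b := 1 + 1)
      (c := 2) (f := fun r => Aux.gfun μ σ (stdNormInv r)) two_ne_zero]
    rw [smul_eq_mul]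
    norm_num
    rw [hp'def]
    norm_num [add_comm p 1]
  -- Step 3: substitution r = Φ(x)
  have hstep3 : ∫ r in p'..1, Aux.gfun μ σ (stdNormInv r)
      = ∫ x in Ioi a, Aux.gfun μ σ x ∂(gaussianReal 0 1) :=
    Aux.integral_comp_stdNormInv hp' (Aux.gfun μ σ) (Aux.gfun_continuous μ σ)
  -- Step 4: Gaussian tail integrals
  have hstep4 : ∫ x in Ioi a, Aux.gfun μ σ x ∂(gaussianReal 0 1)
      = Real.exp (μ + σ ^ 2 / 2) * ((1 - stdNormCdf (a - σ)) + (1 - stdNormCdf (a + σ))) := by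
    have : (fun x => Aux.gfun μ σ x)
        = fun x => Real.exp (μ + σ * x) + Real.exp (μ - σ * x) := by
      funext x
      exact Aux.gfun_eq μ σ x
    rw [this]
    exact Aux.gauss_tail_sum μ σ a
  -- symmetry
  have hm : stdNormInv ((1 - p) / 2) = -a := by
    have : (1 - p) / 2 = 1 - p' := by rw [hp'def]; ring
    rw [this, hadef]
    exact Aux.stdNormInv_one_sub hp'
  have hsym1 : 1 - stdNormCdf (a - σ) = stdNormCdf (stdNormInv ((1 - p) / 2) + σ) := by
    rw [hm, ← Aux.stdNormCdf_neg]
    congr 1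
    ring
  have hsym2 : 1 - stdNormCdf (a + σ) = stdNormCdf (stdNormInv ((1 - p) / 2) - σ) := by
    rw [hm, ← Aux.stdNormCdf_neg]
    congr 1
    ring
  unfold TVaR
  rw [hstep1, hstep2, hstep3, hstep4, hsym1, hsym2]
  have h1p : (1:ℝ) - p ≠ 0 := by linarith
  field_simp
  ring


end
end
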